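/- arXiv:2311.02418 — 3 statements merged into one kernel-verified Lean document; each statement's English description precedes it below -/
import Mathlib

section
/- In any locally κ-coherent exact structure on a κ-accessible additive category A, the full subcategory A_{<κ} of κ-presentable objects is closed under extensions in A: if 0→A¹→A²→A³→0 is an admissible short exact sequence in A with A¹ and A³ κ-presentable, then A² is κ-presentable. Consequently A_{<κ} inherits an exact category structure from A (the admissible short exact sequences of A_{<κ} being those admissible short exact sequences of A with all terms in A_{<κ}). -/
universe w v u

open CategoryTheory CategoryTheory.Limits Opposite

namespace LocCoh

/-- A preorder is `κ`-directed if every subset of cardinality `< κ` has an upper bound. -/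
def IsCardinalDirected (κ : Cardinal.{w}) (J : Type w) [Preorder J] : Prop :=
  ∀ s : Set J, Cardinal.mk s < κ → ∃ j : J, ∀ i ∈ s, i ≤ j

section

variable {A : Type u} [Category.{v} A]

/-- An object `S` is `κ`-presentable if `Hom(S, -)` preserves `κ`-directed colimits. -/
def IsPresentable (κ : Cardinal.{v}) (S : A) : Prop :=
  ∀ (J : Type v) (_ : Preorder J), IsCardinalDirected κ J →
    Nonempty (PreservesColimitsOfShape J (coyoneda.obj (op S)))

end

/-- A category is `κ`-accessible if it has `κ`-directed colimits and a set of
`κ`-presentable objects of which every object is a `κ`-directed colimit. -/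
structure IsAccessibleCat (κ : Cardinal.{v}) (A : Type u) [Category.{v} A] : Prop where
  hasColimitsOfShape : ∀ (J : Type v) (_ : Preorder J), IsCardinalDirected κ J →
    HasColimitsOfShape J A
  exists_generators : ∃ G : Set A, Small.{v} ↥G ∧ (∀ X ∈ G, IsPresentable κ X) ∧
    ∀ X : A, ∃ (J : Type v) (_ : Preorder J) (_ : IsCardinalDirected κ J)
      (F : J ⥤ A) (c : Cocone F) (_ : Nonempty (IsColimit c)), c.pt = X ∧ ∀ j, F.obj j ∈ G

section

variable {A : Type u} [Category.{v} A] [Preadditive A]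

/-- A kernel-cokernel pair: `S.f` is a kernel of `S.g` and `S.g` is a cokernel of `S.f`. -/
def IsKernelCokernelPair (S : ShortComplex A) : Prop :=
  Nonempty (IsLimit (KernelFork.ofι S.f S.zero)) ∧
  Nonempty (IsColimit (CokernelCofork.ofπ S.g S.zero))

/-- `f` is an admissible monomorphism for the class `E` of short exact sequences. -/
def AdmissibleMonoOf (E : Set (ShortComplex A)) {X Y : A} (f : X ⟶ Y) : Prop :=
  ∃ (Z : A) (g : Y ⟶ Z) (w : f ≫ g = 0), ShortComplex.mk f g w ∈ E

/-- `g` is an admissible epimorphism for the class `E` of short exact sequences. -/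
def AdmissibleEpiOf (E : Set (ShortComplex A)) {Y Z : A} (g : Y ⟶ Z) : Prop :=
  ∃ (X : A) (f : X ⟶ Y) (w : f ≫ g = 0), ShortComplex.mk f g w ∈ E

/-- Quillen's axioms for an exact structure (following Bühler): the distinguished class
of kernel-cokernel pairs is closed under isomorphisms, contains the identities as
admissible monos/epis, admissible monos/epis are closed under composition, and admissible
monos (resp. epis) admit pushouts (resp. pullbacks) along arbitrary morphisms, which are
again admissible monos (resp. epis). -/
structure IsExactStructure (E : Set (ShortComplex A)) : Prop where
  kerCoker : ∀ S ∈ E, IsKernelCokernelPair S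
  mem_of_iso : ∀ (S T : ShortComplex A), (S ≅ T) → S ∈ E → T ∈ E
  id_mono : ∀ X : A, AdmissibleMonoOf E (𝟙 X)
  id_epi : ∀ X : A, AdmissibleEpiOf E (𝟙 X)
  mono_comp : ∀ {X Y Z : A} (f : X ⟶ Y) (g : Y ⟶ Z),
    AdmissibleMonoOf E f → AdmissibleMonoOf E g → AdmissibleMonoOf E (f ≫ g)
  epi_comp : ∀ {X Y Z : A} (f : X ⟶ Y) (g : Y ⟶ Z),
    AdmissibleEpiOf E f → AdmissibleEpiOf E g → AdmissibleEpiOf E (f ≫ g)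
  pushout_mono : ∀ {X Y Z : A} (f : X ⟶ Y), AdmissibleMonoOf E f → ∀ (h : X ⟶ Z),
    ∃ (W : A) (h' : Y ⟶ W) (f' : Z ⟶ W), IsPushout f h h' f' ∧ AdmissibleMonoOf E f'
  pullback_epi : ∀ {Y Z X : A} (g : Y ⟶ Z), AdmissibleEpiOf E g → ∀ (h : X ⟶ Z),
    ∃ (W : A) (g' : W ⟶ X) (h' : W ⟶ Y), IsPullback g' h' h g ∧ AdmissibleEpiOf E g'

/-- `S` is a `κ`-directed colimit, computed in the category of three-term complexes,
of short exact sequences from `E` all of whose terms are `κ`-presentable. -/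
def IsColimitOfPresentableSESs (κ : Cardinal.{v}) (E : Set (ShortComplex A))
    (S : ShortComplex A) : Prop :=
  ∃ (J : Type v) (_ : Preorder J) (_ : IsCardinalDirected κ J)
    (F : J ⥤ ShortComplex A) (c : Cocone F) (_ : Nonempty (IsColimit c)),
    c.pt = S ∧ ∀ j : J, F.obj j ∈ E ∧
      IsPresentable κ (F.obj j).X₁ ∧ IsPresentable κ (F.obj j).X₂ ∧
      IsPresentable κ (F.obj j).X₃

/-- An exact structure is locally `κ`-coherent if its admissible short exact sequences
are exactly the `κ`-directed colimits of admissible short exact sequences with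
`κ`-presentable terms. -/
def IsLocallyCoherent (κ : Cardinal.{v}) (E : Set (ShortComplex A)) : Prop :=
  ∀ S : ShortComplex A, S ∈ E ↔ IsColimitOfPresentableSESs κ E S

end

/-- The full subcategory of `κ`-presentable objects. -/
abbrev PresSub (κ : Cardinal.{v}) (A : Type u) [Category.{v} A] :=
  ObjectProperty.FullSubcategory (fun X : A => IsPresentable κ X)

section

variable (κ : Cardinal.{v}) (A : Type u) [Category.{v} A] [Preadditive A]

/-- The inclusion of short complexes of `κ`-presentable objects into short
complexes of `A`. -/
noncomputable def inclSC : ShortComplex (PresSub κ A) ⥤ ShortComplex A :=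
  (ObjectProperty.ι _).mapShortComplex

variable {κ A}

/-- The exact structure inherited on the subcategory of `κ`-presentable objects. -/
def restrictSES (E : Set (ShortComplex A)) : Set (ShortComplex (PresSub κ A)) :=
  {S₀ | (inclSC κ A).obj S₀ ∈ E}

/-- The class of short complexes of `A` which are `κ`-directed colimits of short exact
sequences belonging to a class `E₀` of short exact sequences of `κ`-presentable objects. -/
def inducedSES (E₀ : Set (ShortComplex (PresSub κ A))) : Set (ShortComplex A) :=
  {S | ∃ (J : Type v) (_ : Preorder J) (_ : IsCardinalDirected κ J)
    (F : J ⥤ ShortComplex (PresSub κ A)) (c : Cocone (F ⋙ inclSC κ A))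
    (_ : Nonempty (IsColimit c)), c.pt = S ∧ ∀ j, F.obj j ∈ E₀}

end

section Infra
variable {κ : Cardinal.{v}} {J : Type v} [Preorder J]

theorem IsCardinalDirected.nonempty (hκ : κ.IsRegular) (hJ : IsCardinalDirected κ J) :
    Nonempty J := by
  obtain ⟨j, -⟩ := hJ ∅ (by
    simpa using lt_of_lt_of_le (Cardinal.mk_emptyCollection J ▸ Cardinal.aleph0_pos)
      hκ.aleph0_le)
  exact ⟨j⟩

theorem IsCardinalDirected.bdd2 (hκ : κ.IsRegular) (hJ : IsCardinalDirected κ J)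
    (j j' : J) : ∃ k, j ≤ k ∧ j' ≤ k := by
  obtain ⟨k, hk⟩ := hJ {j, j'} (lt_of_lt_of_le (Set.toFinite _).lt_aleph0 hκ.aleph0_le)
  exact ⟨k, hk j (by simp), hk j' (by simp)⟩

theorem IsCardinalDirected.isFiltered (hκ : κ.IsRegular) (hJ : IsCardinalDirected κ J) :
    IsFiltered J := by
  have : Nonempty J := hJ.nonempty hκ
  have : IsDirected J (· ≤ ·) := ⟨fun j j' => by
    obtain ⟨k, h1, h2⟩ := hJ.bdd2 hκ j j'; exact ⟨k, h1, h2⟩⟩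
  infer_instance

variable {A : Type u} [Category.{v} A]

theorem pres_factor {S : A} (hS : IsPresentable κ S) (hJ : IsCardinalDirected κ J)
    {D : J ⥤ A} {c : Cocone D} (hc : IsColimit c) (t : S ⟶ c.pt) :
    ∃ (j : J) (u : S ⟶ D.obj j), u ≫ c.ι.app j = t := by
  have := (hS J inferInstance hJ).some
  have hc' := isColimitOfPreserves (coyoneda.obj (op S)) hc
  obtain ⟨j, y, hy⟩ := Types.jointly_surjective _ hc' t
  exact ⟨j, y, hy⟩

theorem pres_eq (hκ : κ.IsRegular) {S : A} (hS : IsPresentable κ S)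
    (hJ : IsCardinalDirected κ J)
    {D : J ⥤ A} {c : Cocone D} (hc : IsColimit c) {j j' : J}
    (u : S ⟶ D.obj j) (v : S ⟶ D.obj j')
    (h : u ≫ c.ι.app j = v ≫ c.ι.app j') :
    ∃ (k : J) (hk : j ≤ k) (hk' : j' ≤ k),
      u ≫ D.map hk.hom = v ≫ D.map hk'.hom := by
  have hfil : IsFiltered J := hJ.isFiltered hκ
  have := (hS J inferInstance hJ).some
  have hc' := isColimitOfPreserves (coyoneda.obj (op S)) hc
  have h' : ((coyoneda.obj (op S)).mapCocone c).ι.app j u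
      = ((coyoneda.obj (op S)).mapCocone c).ι.app j' v := h
  rw [Types.FilteredColimit.isColimit_eq_iff _ hc'] at h'
  obtain ⟨k, f, g, hfg⟩ := h'
  exact ⟨k, f.le, g.le, hfg⟩

theorem isPresentable_of (hκ : κ.IsRegular) (S : A)
    (H : ∀ (J : Type v) (_ : Preorder J), IsCardinalDirected κ J →
      ∀ (D : J ⥤ A) (c : Cocone D), IsColimit c →
      (∀ t : S ⟶ c.pt, ∃ j u, u ≫ c.ι.app j = t) ∧
      (∀ (j j' : J) (u : S ⟶ D.obj j) (v : S ⟶ D.obj j'),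
        u ≫ c.ι.app j = v ≫ c.ι.app j' →
        ∃ (k : J) (h : j ≤ k) (h' : j' ≤ k),
          u ≫ D.map h.hom = v ≫ D.map h'.hom)) :
    IsPresentable κ S := by
  intro J _ hJ
  have hfil : IsFiltered J := hJ.isFiltered hκ
  refine ⟨⟨fun {D} => ⟨fun {c} hc => ?_⟩⟩⟩
  obtain ⟨hsurj, hinj⟩ := H J inferInstance hJ D c hc
  refine ⟨Types.FilteredColimit.isColimitOf _ _ ?_ ?_⟩
  · intro t
    obtain ⟨j, u, hu⟩ := hsurj t
    exact ⟨j, u, hu.symm⟩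
  · intro j j' u v huv
    obtain ⟨k, h, h', heq⟩ := hinj j j' u v huv
    exact ⟨k, h.hom, h'.hom, heq⟩

end Infra

section Closure
variable {κ : Cardinal.{v}} {A : Type u} [Category.{v} A]

/-- Retracts of presentable objects are presentable. -/
theorem isPresentable_retract (hκ : κ.IsRegular) {S X : A} (s : S ⟶ X) (r : X ⟶ S)
    (hsr : s ≫ r = 𝟙 S) (hX : IsPresentable κ X) : IsPresentable κ S := by
  refine isPresentable_of hκ S (fun J _ hJ D c hc => ⟨?_, ?_⟩)
  · intro t
    obtain ⟨j, u, hu⟩ := pres_factor hX hJ hc (r ≫ t)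
    exact ⟨j, s ≫ u, by rw [Category.assoc, hu, ← Category.assoc, hsr, Category.id_comp]⟩
  · intro j j' u v huv
    obtain ⟨k, h, h', heq⟩ := pres_eq hκ hX hJ hc (r ≫ u) (r ≫ v)
      (by rw [Category.assoc, Category.assoc, huv])
    refine ⟨k, h, h', ?_⟩
    have := congrArg (fun q => s ≫ q) heq
    simpa [hsr, reassoc_of% hsr] using this

theorem isPresentable_of_iso (hκ : κ.IsRegular) {S X : A} (e : X ≅ S)
    (hX : IsPresentable κ X) : IsPresentable κ S :=
  isPresentable_retract hκ e.inv e.hom e.inv_hom_id hX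

theorem isPresentable_of_isZero (hκ : κ.IsRegular) [Limits.HasZeroMorphisms A] {S : A}
    (hS : IsZero S) : IsPresentable κ S := by
  refine isPresentable_of hκ S (fun J _ hJ D c hc => ⟨?_, ?_⟩)
  · intro t
    obtain ⟨j⟩ := hJ.nonempty hκ
    exact ⟨j, 0, hS.eq_of_src _ _⟩
  · intro j j' u v _
    obtain ⟨k, h, h'⟩ := hJ.bdd2 hκ j j'
    exact ⟨k, h, h', hS.eq_of_src _ _⟩

variable [Preadditive A]

/-- Binary biproducts of presentable objects are presentable. -/
theorem isPresentable_biprod (hκ : κ.IsRegular) [HasBinaryBiproducts A] {X Y : A}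
    (hX : IsPresentable κ X) (hY : IsPresentable κ Y) : IsPresentable κ (X ⊞ Y) := by
  refine isPresentable_of hκ _ (fun J _ hJ D c hc => ⟨?_, ?_⟩)
  · intro t
    obtain ⟨j₁, u, hu⟩ := pres_factor hX hJ hc (biprod.inl ≫ t)
    obtain ⟨j₂, v, hv⟩ := pres_factor hY hJ hc (biprod.inr ≫ t)
    obtain ⟨k, h1, h2⟩ := hJ.bdd2 hκ j₁ j₂
    refine ⟨k, biprod.desc (u ≫ D.map h1.hom) (v ≫ D.map h2.hom), ?_⟩
    apply biprod.hom_ext'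
    · simpa [← hu] using (c.w h1.hom).symm ▸ rfl
    · simp only [biprod.inl_desc_assoc, Category.assoc, c.w, hu, biprod.inr_desc_assoc, hv]
  · intro j j' u v huv
    obtain ⟨k₁, ha, ha', heqa⟩ := pres_eq hκ hX hJ hc (biprod.inl ≫ u) (biprod.inl ≫ v)
      (by rw [Category.assoc, Category.assoc, huv])
    obtain ⟨k₂, hb, hb', heqb⟩ := pres_eq hκ hY hJ hc (biprod.inr ≫ u) (biprod.inr ≫ v)
      (by rw [Category.assoc, Category.assoc, huv])
    obtain ⟨k, h1, h2⟩ := hJ.bdd2 hκ k₁ k₂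
    refine ⟨k, le_trans ha h1, le_trans hb' h2, ?_⟩
    apply biprod.hom_ext'
    · have := congrArg (fun q => q ≫ D.map h1.hom) heqa
      simpa [← D.map_comp] using this
    · have := congrArg (fun q => q ≫ D.map h2.hom) heqb
      simpa [← D.map_comp] using this

end Closure

section Closure2
variable {κ : Cardinal.{v}} {A : Type u} [Category.{v} A]

/-- Pushouts of presentable objects are presentable. -/
theorem isPresentable_isPushout (hκ : κ.IsRegular) {X Y Z W : A}
    {f : X ⟶ Y} {g : X ⟶ Z} {h : Y ⟶ W} {i : Z ⟶ W} (sq : IsPushout f g h i)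
    (hX : IsPresentable κ X) (hY : IsPresentable κ Y) (hZ : IsPresentable κ Z) :
    IsPresentable κ W := by
  refine isPresentable_of hκ W (fun J _ hJ D c hc => ⟨?_, ?_⟩)
  · intro t
    obtain ⟨j₁, u, hu⟩ := pres_factor hY hJ hc (h ≫ t)
    obtain ⟨j₂, v, hv⟩ := pres_factor hZ hJ hc (i ≫ t)
    obtain ⟨k, h1, h2⟩ := hJ.bdd2 hκ j₁ j₂
    have hu'c : (u ≫ D.map h1.hom) ≫ c.ι.app k = h ≫ t := by
      rw [Category.assoc, c.w, hu]
    have hv'c : (v ≫ D.map h2.hom) ≫ c.ι.app k = i ≫ t := by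
      rw [Category.assoc, c.w, hv]
    have : (f ≫ u ≫ D.map h1.hom) ≫ c.ι.app k
        = (g ≫ v ≫ D.map h2.hom) ≫ c.ι.app k := by
      simp only [Category.assoc, Cocone.w]
      rw [hu, hv, ← Category.assoc, ← Category.assoc, sq.w]
    obtain ⟨k', hk1, hk2, heq⟩ := pres_eq hκ hX hJ hc _ _ this
    have hkk : hk1.hom = hk2.hom := Subsingleton.elim _ _
    rw [hkk] at heq
    simp only [Category.assoc] at heq
    refine ⟨k', sq.desc (u ≫ D.map h1.hom ≫ D.map hk2.hom)
      (v ≫ D.map h2.hom ≫ D.map hk2.hom) heq, ?_⟩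
    apply sq.hom_ext
    · rw [← Category.assoc, sq.inl_desc]
      simp only [Category.assoc, Cocone.w]
      exact hu
    · rw [← Category.assoc, sq.inr_desc]
      simp only [Category.assoc, Cocone.w]
      exact hv
  · intro j j' u v huv
    obtain ⟨k₁, ha, ha', heqa⟩ := pres_eq hκ hY hJ hc (h ≫ u) (h ≫ v)
      (by rw [Category.assoc, Category.assoc, huv])
    obtain ⟨k₂, hb, hb', heqb⟩ := pres_eq hκ hZ hJ hc (i ≫ u) (i ≫ v)
      (by rw [Category.assoc, Category.assoc, huv])
    obtain ⟨k, h1, h2⟩ := hJ.bdd2 hκ k₁ k₂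
    refine ⟨k, le_trans ha h1, le_trans hb' h2, ?_⟩
    apply sq.hom_ext
    · have := congrArg (fun q => q ≫ D.map h1.hom) heqa
      simp only [Category.assoc, ← D.map_comp] at this ⊢
      convert this using 4 <;> exact Subsingleton.elim _ _
    · have := congrArg (fun q => q ≫ D.map h2.hom) heqb
      simp only [Category.assoc, ← D.map_comp] at this ⊢
      convert this using 4 <;> exact Subsingleton.elim _ _

/-- If `e : M ⟶ N` is a cokernel of `m : L ⟶ M` with `L`, `M` presentable,
then `N` is presentable. -/
theorem isPresentable_cokernel (hκ : κ.IsRegular) [Limits.HasZeroMorphisms A]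
    {L M N : A} {m : L ⟶ M} {e : M ⟶ N} {w : m ≫ e = 0}
    (hcoker : IsColimit (CokernelCofork.ofπ e w))
    (hL : IsPresentable κ L) (hM : IsPresentable κ M) : IsPresentable κ N := by
  have hepi : ∀ {T : A} (a b : N ⟶ T), e ≫ a = e ≫ b → a = b := fun a b hab =>
    Cofork.IsColimit.hom_ext hcoker hab
  refine isPresentable_of hκ N (fun J _ hJ D c hc => ⟨?_, ?_⟩)
  · intro t
    obtain ⟨j, s, hs⟩ := pres_factor hM hJ hc (e ≫ t)
    have : (m ≫ s) ≫ c.ι.app j = (0 : L ⟶ D.obj j) ≫ c.ι.app j := by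
      rw [Category.assoc, hs, ← Category.assoc, w, zero_comp, zero_comp]
    obtain ⟨k, h1, h2, heq⟩ := pres_eq hκ hL hJ hc (m ≫ s) 0 this
    rw [zero_comp, Category.assoc] at heq
    obtain ⟨ρ, hρ⟩ := CokernelCofork.IsColimit.desc' hcoker (s ≫ D.map h1.hom) heq
    simp only [Cofork.π_ofπ] at hρ
    refine ⟨k, ρ, hepi _ _ ?_⟩
    rw [← Category.assoc, hρ, Category.assoc, c.w, hs]
  · intro j j' u v huv
    obtain ⟨k, h1, h2, heq⟩ := pres_eq hκ hM hJ hc (e ≫ u) (e ≫ v)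
      (by rw [Category.assoc, Category.assoc, huv])
    rw [Category.assoc, Category.assoc] at heq
    exact ⟨k, h1, h2, hepi _ _ heq⟩

end Closure2


section ExactTools
variable {A : Type u} [Category.{v} A] [Preadditive A]
variable {E : Set (ShortComplex A)}

theorem ses_mono {S : ShortComplex A} (hkc : IsKernelCokernelPair S)
    {T : A} {a b : T ⟶ S.X₁} (h : a ≫ S.f = b ≫ S.f) : a = b := by
  obtain ⟨hlim⟩ := hkc.1
  exact Fork.IsLimit.hom_ext hlim (by simpa using h)

theorem ses_epi {S : ShortComplex A} (hkc : IsKernelCokernelPair S)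
    {T : A} {a b : S.X₃ ⟶ T} (h : S.g ≫ a = S.g ≫ b) : a = b := by
  obtain ⟨hcolim⟩ := hkc.2
  exact Cofork.IsColimit.hom_ext hcolim (by simpa using h)

theorem ses_klift {S : ShortComplex A} (hkc : IsKernelCokernelPair S)
    {T : A} (u : T ⟶ S.X₂) (hu : u ≫ S.g = 0) : ∃ l : T ⟶ S.X₁, l ≫ S.f = u := by
  obtain ⟨hlim⟩ := hkc.1
  obtain ⟨l, hl⟩ := KernelFork.IsLimit.lift' hlim u hu
  exact ⟨l, by simpa using hl⟩

theorem ses_cdesc {S : ShortComplex A} (hkc : IsKernelCokernelPair S)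
    {T : A} (u : S.X₂ ⟶ T) (hu : S.f ≫ u = 0) : ∃ l : S.X₃ ⟶ T, S.g ≫ l = u := by
  obtain ⟨hcolim⟩ := hkc.2
  obtain ⟨l, hl⟩ := CokernelCofork.IsColimit.desc' hcolim u hu
  exact ⟨l, by simpa using hl⟩

variable (hE : IsExactStructure E)
include hE

/-- Flexible transport of membership in `E` along isomorphisms of all three terms. -/
theorem mem_of_iso' {S : ShortComplex A} (mem : S ∈ E) {X₁' X₂' X₃' : A}
    (e₁ : S.X₁ ≅ X₁') (e₂ : S.X₂ ≅ X₂') (e₃ : S.X₃ ≅ X₃')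
    {f' : X₁' ⟶ X₂'} {g' : X₂' ⟶ X₃'} {w' : f' ≫ g' = 0}
    (h₁₂ : S.f ≫ e₂.hom = e₁.hom ≫ f') (h₂₃ : S.g ≫ e₃.hom = e₂.hom ≫ g') :
    ShortComplex.mk f' g' w' ∈ E :=
  hE.mem_of_iso S _ (ShortComplex.isoMk e₁ e₂ e₃ h₁₂.symm h₂₃.symm) mem

/-- An admissible epi precomposed with an isomorphism is admissible epi. -/
theorem admEpi_iso_comp {Y' Y Z : A} (i : Y' ≅ Y) {e : Y ⟶ Z}
    (he : AdmissibleEpiOf E e) : AdmissibleEpiOf E (i.hom ≫ e) := by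
  obtain ⟨K, k, w, mem⟩ := he
  refine ⟨K, k ≫ i.inv, by rw [Category.assoc, Iso.inv_hom_id_assoc, w], ?_⟩
  exact mem_of_iso' hE mem (Iso.refl _) i.symm (Iso.refl _)
    (by dsimp; rw [Category.id_comp]) (by dsimp; rw [Category.comp_id]; exact (Iso.eq_inv_comp i).mpr rfl)

omit hE in
theorem isZero_of_coker_id {X Z : A} {g : X ⟶ Z} {w : 𝟙 X ≫ g = 0}
    (hkc : IsKernelCokernelPair (ShortComplex.mk (𝟙 X) g w)) : IsZero Z := by
  have hg : g = 0 := by simpa using w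
  rw [IsZero.iff_id_eq_zero]
  apply ses_epi (S := ShortComplex.mk (𝟙 X) g w) hkc
  simp [show (ShortComplex.mk (𝟙 X) g w).g = g from rfl, hg]

omit hE in
theorem isZero_of_ker_id {K X : A} {f : K ⟶ X} {w : f ≫ 𝟙 X = 0}
    (hkc : IsKernelCokernelPair (ShortComplex.mk f (𝟙 X) w)) : IsZero K := by
  have hf : f = 0 := by simpa using w
  rw [IsZero.iff_id_eq_zero]
  apply ses_mono (S := ShortComplex.mk f (𝟙 X) w) hkc
  simp [show (ShortComplex.mk f (𝟙 X) w).f = f from rfl, hf]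

/-- For any zero object `O`, the sequence `X = X → O` is admissible. -/
theorem mem_id_zero {X O : A} (hO : IsZero O) :
    ShortComplex.mk (𝟙 X) (0 : X ⟶ O) (by simp) ∈ E := by
  obtain ⟨Z, g, w, mem⟩ := hE.id_mono X
  have hZ : IsZero Z := isZero_of_coker_id (hE.kerCoker _ mem)
  exact mem_of_iso' hE mem (Iso.refl _) (Iso.refl _) (hZ.iso hO)
    (by simp)
    (hO.eq_of_tgt _ _)

/-- For any zero object `O`, the sequence `O → X = X` is admissible. -/
theorem mem_zero_id {X O : A} (hO : IsZero O) :
    ShortComplex.mk (0 : O ⟶ X) (𝟙 X) (by simp) ∈ E := by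
  obtain ⟨K, f, w, mem⟩ := hE.id_epi X
  have hK : IsZero K := isZero_of_ker_id (hE.kerCoker _ mem)
  exact mem_of_iso' hE mem (hK.iso hO) (Iso.refl _) (Iso.refl _)
    (hK.eq_of_src _ _)
    (by simp)

theorem admEpi_to_zero {X O : A} (hO : IsZero O) : AdmissibleEpiOf E (0 : X ⟶ O) :=
  ⟨X, 𝟙 X, by simp, mem_id_zero hE hO⟩

end ExactTools

section PBHelper
variable {A : Type u} [Category.{v} A]

/-- Hand-made construction of `IsPullback`. -/
theorem isPullback_mk {P X Y Z : A} (fst : P ⟶ X) (snd : P ⟶ Y) (f : X ⟶ Z) (g : Y ⟶ Z)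
    (eq : fst ≫ f = snd ≫ g)
    (lift : ∀ {T : A} (a : T ⟶ X) (b : T ⟶ Y), a ≫ f = b ≫ g → (T ⟶ P))
    (hl1 : ∀ {T : A} (a : T ⟶ X) (b : T ⟶ Y) (w : a ≫ f = b ≫ g), lift a b w ≫ fst = a)
    (hl2 : ∀ {T : A} (a : T ⟶ X) (b : T ⟶ Y) (w : a ≫ f = b ≫ g), lift a b w ≫ snd = b)
    (huniq : ∀ {T : A} (m m' : T ⟶ P), m ≫ fst = m' ≫ fst → m ≫ snd = m' ≫ snd → m = m') :
    IsPullback fst snd f g := by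
  exact IsPullback.of_isLimit (c := PullbackCone.mk fst snd eq)
    (PullbackCone.IsLimit.mk eq (fun s => lift s.fst s.snd s.condition)
      (fun s => hl1 _ _ _) (fun s => hl2 _ _ _)
      (fun s m h1 h2 => huniq _ _ (by rw [h1, hl1]) (by rw [h2, hl2])))

/-- Hand-made construction of `IsPushout`. -/
theorem isPushout_mk {Z X Y P : A} (f : Z ⟶ X) (g : Z ⟶ Y) (inl : X ⟶ P) (inr : Y ⟶ P)
    (eq : f ≫ inl = g ≫ inr)
    (desc : ∀ {T : A} (a : X ⟶ T) (b : Y ⟶ T), f ≫ a = g ≫ b → (P ⟶ T))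
    (hd1 : ∀ {T : A} (a : X ⟶ T) (b : Y ⟶ T) (w : f ≫ a = g ≫ b), inl ≫ desc a b w = a)
    (hd2 : ∀ {T : A} (a : X ⟶ T) (b : Y ⟶ T) (w : f ≫ a = g ≫ b), inr ≫ desc a b w = b)
    (huniq : ∀ {T : A} (m m' : P ⟶ T), inl ≫ m = inl ≫ m' → inr ≫ m = inr ≫ m' → m = m') :
    IsPushout f g inl inr := by
  exact IsPushout.of_isColimit (c := PushoutCocone.mk inl inr eq)
    (PushoutCocone.IsColimit.mk eq (fun s => desc s.inl s.inr s.condition)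
      (fun s => hd1 _ _ _) (fun s => hd2 _ _ _)
      (fun s m h1 h2 => huniq _ _ (by rw [h1, hd1]) (by rw [h2, hd2])))

/-- Transport of `AdmissibleEpiOf` along a commuting isomorphism. -/
theorem admEpi_of_comm {Y' Y Z : A} [Preadditive A] {E : Set (ShortComplex A)}
    (hE : IsExactStructure E) (i : Y' ≅ Y) {e : Y ⟶ Z}
    (he : AdmissibleEpiOf E e) (e' : Y' ⟶ Z) (h : e' = i.hom ≫ e) :
    AdmissibleEpiOf E e' := h ▸ admEpi_iso_comp hE i he

end PBHelper

section BiprodTools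
variable {A : Type u} [Category.{v} A] [Preadditive A] [HasBinaryBiproducts A]
variable {E : Set (ShortComplex A)} (hE : IsExactStructure E)
include hE

theorem admEpi_biprod_fst {X Y O : A} (hO : IsZero O) :
    AdmissibleEpiOf E (biprod.fst : X ⊞ Y ⟶ X) := by
  obtain ⟨W, g', h', hpb, hadm⟩ := hE.pullback_epi (0 : Y ⟶ O) (admEpi_to_zero hE hO)
    (0 : X ⟶ O)
  have hpb0 : IsPullback (biprod.fst : X ⊞ Y ⟶ X) (biprod.snd : X ⊞ Y ⟶ Y)
      (0 : X ⟶ O) (0 : Y ⟶ O) := by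
    refine isPullback_mk _ _ _ _ (by simp) (fun a b _ => biprod.lift a b) ?_ ?_ ?_
    · intro T a b w; simp
    · intro T a b w; simp
    · intro T m m' h1 h2
      apply biprod.hom_ext <;> assumption
  refine admEpi_of_comm hE (hpb.isoIsPullback _ _ hpb0).symm hadm _ ?_
  rw [Iso.symm_hom, Iso.eq_inv_comp, IsPullback.isoIsPullback_hom_fst]

theorem admEpi_biprod_map {B B'' X : A} {g : B ⟶ B''} (hg : AdmissibleEpiOf E g) :
    AdmissibleEpiOf E (biprod.map g (𝟙 X)) := by
  obtain ⟨W, g', h', hpb, hadm⟩ := hE.pullback_epi g hg (biprod.fst : B'' ⊞ X ⟶ B'')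
  have hpb0 : IsPullback (biprod.map g (𝟙 X)) (biprod.fst : B ⊞ X ⟶ B)
      (biprod.fst : B'' ⊞ X ⟶ B'') g := by
    refine isPullback_mk _ _ _ _ (by simp) (fun a b _ => biprod.lift b (a ≫ biprod.snd)) ?_ ?_ ?_
    · intro T a b w
      apply biprod.hom_ext
      · simpa using w.symm
      · simp
    · intro T a b w; simp
    · intro T m m' h1 h2
      apply biprod.hom_ext
      · simpa using h2
      · have := congrArg (fun q => q ≫ (biprod.snd : B'' ⊞ X ⟶ X)) h1
        simpa using this
  refine admEpi_of_comm hE (hpb.isoIsPullback _ _ hpb0).symm hadm _ ?_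
  rw [Iso.symm_hom, Iso.eq_inv_comp, IsPullback.isoIsPullback_hom_fst]

omit hE in
private theorem shear_hom_inv {B'' X : A} (u : X ⟶ B'') :
    biprod.desc biprod.inl (biprod.lift u (𝟙 X)) ≫
      biprod.desc biprod.inl (biprod.lift (-u) (𝟙 X)) = 𝟙 (B'' ⊞ X) := by
  apply biprod.hom_ext' <;> apply biprod.hom_ext <;> simp

/-- The shearing automorphism of a binary biproduct. -/
noncomputable def biprodLiftIso {B'' X : A} (u : X ⟶ B'') : B'' ⊞ X ≅ B'' ⊞ X where
  hom := biprod.desc biprod.inl (biprod.lift u (𝟙 X))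
  inv := biprod.desc biprod.inl (biprod.lift (-u) (𝟙 X))
  hom_inv_id := shear_hom_inv u
  inv_hom_id := by simpa using shear_hom_inv (-u)

theorem admEpi_desc_id {B'' X O : A} (hO : IsZero O) (u : X ⟶ B'') :
    AdmissibleEpiOf E (biprod.desc (𝟙 B'') u) := by
  have hθ : biprod.desc (𝟙 B'') u
      = (biprodLiftIso u).hom ≫ (biprod.fst : B'' ⊞ X ⟶ B'') := by
    apply biprod.hom_ext' <;> simp [biprodLiftIso]
  rw [hθ]
  exact admEpi_iso_comp hE _ (admEpi_biprod_fst hE hO)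

theorem admEpi_desc {B B'' X O : A} (hO : IsZero O) {g : B ⟶ B''}
    (hg : AdmissibleEpiOf E g) (u : X ⟶ B'') :
    AdmissibleEpiOf E (biprod.desc g u) := by
  have : biprod.desc g u = biprod.map g (𝟙 X) ≫ biprod.desc (𝟙 B'') u := by
    apply biprod.hom_ext' <;> simp
  rw [this]
  exact hE.epi_comp _ _ (admEpi_biprod_map hE hg) (admEpi_desc_id hE hO u)

end BiprodTools

section Packages
variable {A : Type u} [Category.{v} A] [Preadditive A]
variable {E : Set (ShortComplex A)} (hE : IsExactStructure E)
include hE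

/-- Pullback of an admissible epi along any morphism, with full admissibility data. -/
theorem pb_package [HasBinaryBiproducts A] {K B Z X : A} {kg : K ⟶ B} {g : B ⟶ Z}
    {wg : kg ≫ g = 0} (memS : ShortComplex.mk kg g wg ∈ E) (h : X ⟶ Z)
    {O : A} (hO : IsZero O) :
    ∃ (C : A) (pX : C ⟶ X) (pB : C ⟶ B) (χ : K ⟶ C) (kC : C ⟶ B ⊞ X)
      (wδ : kC ≫ biprod.desc g (-h) = 0) (wχ : χ ≫ pX = 0),
      IsPullback pX pB h g ∧
      ShortComplex.mk kC (biprod.desc g (-h)) wδ ∈ E ∧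
      ShortComplex.mk χ pX wχ ∈ E ∧
      χ ≫ pB = kg ∧ kC ≫ biprod.fst = pB ∧ kC ≫ biprod.snd = pX := by
  have hδ : AdmissibleEpiOf E (biprod.desc g (-h)) :=
    admEpi_desc hE hO ⟨K, kg, wg, memS⟩ (-h)
  obtain ⟨C, kC, wδ, memδ⟩ := hδ
  have kcδ := hE.kerCoker _ memδ
  set pB : C ⟶ B := kC ≫ biprod.fst with hpB
  set pX : C ⟶ X := kC ≫ biprod.snd with hpX
  have hkC : kC = biprod.lift pB pX := by
    apply biprod.hom_ext <;> simp [hpB, hpX]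
  have sq : pX ≫ h = pB ≫ g := by
    have h0 := wδ
    rw [hkC, biprod.lift_desc, Preadditive.comp_neg] at h0
    exact (add_neg_eq_zero.mp h0).symm
  -- the lift into C
  have hlift : ∀ {T : A} (a : T ⟶ X) (b : T ⟶ B), a ≫ h = b ≫ g →
      ∃ l : T ⟶ C, l ≫ kC = biprod.lift b a := by
    intro T a b w
    have : biprod.lift b a ≫ biprod.desc g (-h) = 0 := by
      rw [biprod.lift_desc, Preadditive.comp_neg, w]
      exact add_neg_cancel _
    exact ses_klift kcδ (biprod.lift b a) this
  have hkCmono : ∀ {T : A} (m m' : T ⟶ C), m ≫ kC = m' ≫ kC → m = m' :=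
    fun m m' hmm => ses_mono kcδ hmm
  have pb : IsPullback pX pB h g := by
    refine isPullback_mk _ _ _ _ sq (fun a b w => (hlift a b w).choose) ?_ ?_ ?_
    · intro T a b w
      have := (hlift a b w).choose_spec
      rw [hpX, ← Category.assoc, this]; simp
    · intro T a b w
      have := (hlift a b w).choose_spec
      rw [hpB, ← Category.assoc, this]; simp
    · intro T m m' h1 h2
      refine hkCmono m m' ?_
      rw [hkC]
      apply biprod.hom_ext
      · simpa [hpB] using h2
      · simpa [hpX] using h1
  -- pX is an admissible epi
  obtain ⟨W, g₀, h₀, pb₀, hadm₀⟩ := hE.pullback_epi g ⟨K, kg, wg, memS⟩ h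
  have hpXadm : AdmissibleEpiOf E pX := by
    refine admEpi_of_comm hE (pb₀.isoIsPullback _ _ pb).symm hadm₀ _ ?_
    rw [Iso.symm_hom, Iso.eq_inv_comp, IsPullback.isoIsPullback_hom_fst]
  obtain ⟨K₂, k₂, w₂, mem₂⟩ := hpXadm
  have kc₂ := hE.kerCoker _ mem₂
  have kcS := hE.kerCoker _ memS
  have hχw : (0 : K ⟶ X) ≫ h = kg ≫ g := by rw [zero_comp, wg]
  set χ : K ⟶ C := pb.lift 0 kg hχw with hχ
  have hχX : χ ≫ pX = 0 := pb.lift_fst _ _ _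
  have hχB : χ ≫ pB = kg := pb.lift_snd _ _ _
  obtain ⟨χ', hχ'⟩ := ses_klift kc₂ χ hχX
  obtain ⟨ψ, hψ⟩ := ses_klift kcS (k₂ ≫ pB) (by
    rw [Category.assoc, ← sq, ← Category.assoc, w₂, zero_comp])
  have hψχ : ψ ≫ χ = k₂ := by
    apply pb.hom_ext
    · rw [Category.assoc, hχX, comp_zero, w₂]
    · rw [Category.assoc, hχB, hψ]
  have h1 : χ' ≫ ψ = 𝟙 K := by
    apply ses_mono kcS
    show (χ' ≫ ψ) ≫ kg = 𝟙 K ≫ kg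
    rw [Category.assoc, hψ, ← Category.assoc, hχ', hχB, Category.id_comp]
  have h2 : ψ ≫ χ' = 𝟙 K₂ := by
    apply ses_mono kc₂
    show (ψ ≫ χ') ≫ k₂ = 𝟙 K₂ ≫ k₂
    rw [Category.assoc, hχ', hψχ, Category.id_comp]
  have memχ : ShortComplex.mk χ pX hχX ∈ E := by
    refine mem_of_iso' hE mem₂ (Iso.mk ψ χ' h2 h1) (Iso.refl _) (Iso.refl _) ?_ ?_
    · show k₂ ≫ 𝟙 C = ψ ≫ χ
      rw [Category.comp_id, hψχ]
    · show pX ≫ 𝟙 X = 𝟙 C ≫ pX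
      rw [Category.comp_id, Category.id_comp]
  exact ⟨C, pX, pB, χ, kC, wδ, hχX, pb, memδ, memχ, hχB, rfl, rfl⟩

/-- Pushout of an admissible mono along any morphism, with full admissibility data. -/
theorem po_package {X Y Z T : A} {m : X ⟶ Y} {q : Y ⟶ Z} {wq : m ≫ q = 0}
    (memS : ShortComplex.mk m q wq ∈ E) (h : X ⟶ T) :
    ∃ (P : A) (iY : Y ⟶ P) (iT : T ⟶ P) (π : P ⟶ Z) (wπ : iT ≫ π = 0),
      IsPushout m h iY iT ∧ ShortComplex.mk iT π wπ ∈ E ∧ iY ≫ π = q := by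
  obtain ⟨W, h', f', po, hf'⟩ := hE.pushout_mono m ⟨Z, q, wq, memS⟩ h
  obtain ⟨V, e₀, w₀, mem₀⟩ := hf'
  have kc₀ := hE.kerCoker _ mem₀
  have kcS := hE.kerCoker _ memS
  set π : W ⟶ Z := po.desc q 0 (by rw [wq, comp_zero]) with hπ
  have hYπ : h' ≫ π = q := po.inl_desc _ _ _
  have wπ : f' ≫ π = 0 := po.inr_desc _ _ _
  obtain ⟨ψ, hψ⟩ := ses_cdesc kc₀ π wπ
  obtain ⟨χ, hχ⟩ := ses_cdesc kcS (h' ≫ e₀) (by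
    rw [← Category.assoc, po.w, Category.assoc, w₀, comp_zero])
  have hπχ : π ≫ χ = e₀ := by
    apply po.hom_ext
    · rw [← Category.assoc, hYπ, hχ]
    · rw [← Category.assoc, wπ, zero_comp, ← w₀]
  have h1 : χ ≫ ψ = 𝟙 Z := by
    apply ses_epi kcS
    show q ≫ χ ≫ ψ = q ≫ 𝟙 Z
    rw [← Category.assoc, hχ, Category.assoc, hψ, hYπ, Category.comp_id]
  have h2 : ψ ≫ χ = 𝟙 V := by
    apply ses_epi kc₀
    show e₀ ≫ ψ ≫ χ = e₀ ≫ 𝟙 V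
    rw [← Category.assoc, hψ, hπχ, Category.comp_id]
  have memπ : ShortComplex.mk f' π wπ ∈ E := by
    refine mem_of_iso' hE mem₀ (Iso.refl _) (Iso.refl _) (Iso.mk ψ χ h2 h1) ?_ ?_
    · show f' ≫ 𝟙 W = 𝟙 T ≫ f'
      rw [Category.comp_id, Category.id_comp]
    · show e₀ ≫ ψ = 𝟙 W ≫ π
      rw [hψ, Category.id_comp]
  exact ⟨W, h', f', π, wπ, po, memπ, hYπ⟩

end Packages

section Coherent
variable {A : Type u} [Category.{v} A] [Preadditive A]

variable {κ : Cardinal.{v}} {E : Set (ShortComplex A)}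

/-- In a locally coherent exact category, kernels of admissible epis between
presentable objects are presentable. -/
theorem presentable_ker (hκ : κ.IsRegular)
    (hshape : ∀ (J : Type v) (_ : Preorder J), IsCardinalDirected κ J → HasColimitsOfShape J A)
    (hE : IsExactStructure E) (hlc : IsLocallyCoherent κ E)
    {T : ShortComplex A} (memT : T ∈ E)
    (h2 : IsPresentable κ T.X₂) (h3 : IsPresentable κ T.X₃) : IsPresentable κ T.X₁ := by
  obtain ⟨J, _, hJ, F, c, ⟨hcol⟩, hpt, hterms⟩ := (hlc T).mp memT
  subst hpt
  haveI : HasColimitsOfShape J A := hshape J inferInstance hJ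
  have hcol₂ : IsColimit ((ShortComplex.π₂ (C := A)).mapCocone c) :=
    isColimitOfPreserves _ hcol
  have hcol₃ : IsColimit ((ShortComplex.π₃ (C := A)).mapCocone c) :=
    isColimitOfPreserves _ hcol
  -- a retraction for X₂
  obtain ⟨j₂, u₂, hu₂⟩ := pres_factor h2 hJ hcol₂ (𝟙 c.pt.X₂)
  obtain ⟨j₃, u₃, hu₃⟩ := pres_factor h3 hJ hcol₃ (𝟙 c.pt.X₃)
  obtain ⟨k₀, hk₂, hk₃⟩ := hJ.bdd2 hκ j₂ j₃
  set u₂0 : c.pt.X₂ ⟶ (F.obj k₀).X₂ := u₂ ≫ (F.map hk₂.hom).τ₂ with hu₂0def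
  set u₃0 : c.pt.X₃ ⟶ (F.obj k₀).X₃ := u₃ ≫ (F.map hk₃.hom).τ₃ with hu₃0def
  have hτ₂ : ∀ {i i' : J} (hii : i ≤ i'),
      (F.map hii.hom).τ₂ ≫ (c.ι.app i').τ₂ = (c.ι.app i).τ₂ := by
    intro i i' hii
    rw [← ShortComplex.comp_τ₂, c.w]
  have hτ₃ : ∀ {i i' : J} (hii : i ≤ i'),
      (F.map hii.hom).τ₃ ≫ (c.ι.app i').τ₃ = (c.ι.app i).τ₃ := by
    intro i i' hii
    rw [← ShortComplex.comp_τ₃, c.w]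
  have hτ₁ : ∀ {i i' : J} (hii : i ≤ i'),
      (F.map hii.hom).τ₁ ≫ (c.ι.app i').τ₁ = (c.ι.app i).τ₁ := by
    intro i i' hii
    rw [← ShortComplex.comp_τ₁, c.w]
  have hcomm12 : ∀ i : J, (c.ι.app i).τ₁ ≫ c.pt.f = (F.obj i).f ≫ (c.ι.app i).τ₂ :=
    fun i => (c.ι.app i).comm₁₂
  have hcomm23 : ∀ i : J, (c.ι.app i).τ₂ ≫ c.pt.g = (F.obj i).g ≫ (c.ι.app i).τ₃ :=
    fun i => (c.ι.app i).comm₂₃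
  have hu₂0 : u₂0 ≫ (c.ι.app k₀).τ₂ = 𝟙 c.pt.X₂ := by
    rw [hu₂0def]; exact (Category.assoc _ _ _).trans ((congrArg (fun q => u₂ ≫ q) (hτ₂ hk₂)).trans hu₂)
  have hu₃0 : u₃0 ≫ (c.ι.app k₀).τ₃ = 𝟙 c.pt.X₃ := by
    rw [hu₃0def]; exact (Category.assoc _ _ _).trans ((congrArg (fun q => u₃ ≫ q) (hτ₃ hk₃)).trans hu₃)
  -- equalize `u₂0 ≫ g` and `g ≫ u₃0`
  have hcomp : (u₂0 ≫ (F.obj k₀).g) ≫ ((ShortComplex.π₃ (C := A)).mapCocone c).ι.app k₀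
      = (c.pt.g ≫ u₃0) ≫ ((ShortComplex.π₃ (C := A)).mapCocone c).ι.app k₀ := by
    show (u₂0 ≫ (F.obj k₀).g) ≫ (c.ι.app k₀).τ₃ = (c.pt.g ≫ u₃0) ≫ (c.ι.app k₀).τ₃
    simp only [Category.assoc]
    rw [← hcomm23 k₀, ← Category.assoc, hu₂0, Category.id_comp, hu₃0, Category.comp_id]
  obtain ⟨k₁, hk, hk', heq⟩ := pres_eq hκ h2 hJ hcol₃ _ _ hcomp
  have hkk : hk.hom = hk'.hom := Subsingleton.elim _ _
  rw [hkk] at heq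
  -- heq : (u₂0 ≫ (F.obj k₀).g) ≫ (F.map hk'.hom).τ₃ = (c.pt.g ≫ u₃0) ≫ (F.map hk'.hom).τ₃
  set φ := F.map hk'.hom with hφdef
  set u₂1 : c.pt.X₂ ⟶ (F.obj k₁).X₂ := u₂0 ≫ φ.τ₂ with hu₂1def
  have hu₂1 : u₂1 ≫ (c.ι.app k₁).τ₂ = 𝟙 c.pt.X₂ := by
    rw [hu₂1def, Category.assoc, hτ₂]; exact hu₂0
  have key : u₂1 ≫ (F.obj k₁).g = c.pt.g ≫ u₃0 ≫ φ.τ₃ := by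
    have hφ23 : φ.τ₂ ≫ (F.obj k₁).g = (F.obj k₀).g ≫ φ.τ₃ := φ.comm₂₃
    have heq' : (u₂0 ≫ (F.obj k₀).g) ≫ φ.τ₃ = (c.pt.g ≫ u₃0) ≫ φ.τ₃ := heq
    calc u₂1 ≫ (F.obj k₁).g = u₂0 ≫ φ.τ₂ ≫ (F.obj k₁).g := by
          rw [hu₂1def, Category.assoc]
      _ = (u₂0 ≫ (F.obj k₀).g) ≫ φ.τ₃ := by
          rw [hφ23, ← Category.assoc]
      _ = (c.pt.g ≫ u₃0) ≫ φ.τ₃ := heq'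
      _ = c.pt.g ≫ u₃0 ≫ φ.τ₃ := Category.assoc _ _ _
  -- lift the composition through the kernel of `(F.obj k₁).g`
  have hmem₁ := (hterms k₁).1
  have kc₁ := hE.kerCoker _ hmem₁
  have kcT := hE.kerCoker _ memT
  have hzero : (c.pt.f ≫ u₂1) ≫ (F.obj k₁).g = 0 := by
    rw [Category.assoc, key, ← Category.assoc, ← Category.assoc, c.pt.zero, zero_comp,
      zero_comp]
  obtain ⟨w, hw⟩ := ses_klift kc₁ (c.pt.f ≫ u₂1) hzero
  have hretr : w ≫ (c.ι.app k₁).τ₁ = 𝟙 c.pt.X₁ := by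
    apply ses_mono kcT
    show (w ≫ (c.ι.app k₁).τ₁) ≫ c.pt.f = 𝟙 c.pt.X₁ ≫ c.pt.f
    rw [Category.id_comp, Category.assoc, hcomm12 k₁, ← Category.assoc, hw,
      Category.assoc, hu₂1, Category.comp_id]
  exact isPresentable_retract hκ w ((c.ι.app k₁).τ₁) hretr (hterms k₁).2.1

end Coherent

section Split
variable {κ : Cardinal.{v}} {A : Type u} [Category.{v} A] [Preadditive A]

/-- If an admissible-type short exact sequence splits, the middle object is a
biproduct of the outer ones, hence presentable whenever they are. -/
theorem isPresentable_split (hκ : κ.IsRegular) [HasBinaryBiproducts A] {K Q P : A}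
    {k : K ⟶ Q} {q : Q ⟶ P} {w : k ≫ q = 0}
    (kc : IsKernelCokernelPair (ShortComplex.mk k q w))
    (s : P ⟶ Q) (hs : s ≫ q = 𝟙 P)
    (hK : IsPresentable κ K) (hP : IsPresentable κ P) : IsPresentable κ Q := by
  have hz : (𝟙 Q - q ≫ s) ≫ q = 0 := by
    rw [Preadditive.sub_comp, Category.id_comp, Category.assoc, hs, Category.comp_id,
      sub_self]
  obtain ⟨r, hr⟩ := ses_klift kc (𝟙 Q - q ≫ s) hz
  have hsr : s ≫ r = 0 := by
    apply ses_mono kc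
    show (s ≫ r) ≫ k = 0 ≫ k
    rw [Category.assoc, hr, Preadditive.comp_sub, Category.comp_id, ← Category.assoc, hs,
      Category.id_comp, sub_self, zero_comp]
  have hkr : k ≫ r = 𝟙 K := by
    apply ses_mono kc
    show (k ≫ r) ≫ k = 𝟙 K ≫ k
    rw [Category.assoc, hr, Preadditive.comp_sub, Category.comp_id, ← Category.assoc, w,
      zero_comp, sub_zero, Category.id_comp]
  have h1 : biprod.lift q r ≫ biprod.desc s k = 𝟙 Q := by
    rw [biprod.lift_desc, hr, add_sub_cancel]
  have h2 : biprod.desc s k ≫ biprod.lift q r = 𝟙 (P ⊞ K) := by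
    apply biprod.hom_ext'
    · apply biprod.hom_ext <;> simp [hs, hsr]
    · apply biprod.hom_ext <;> simp [hkr, w]
  exact isPresentable_of_iso hκ (Iso.mk (biprod.desc s k) (biprod.lift q r) h2 h1)
    (isPresentable_biprod hκ hP hK)

end Split

section Ext
variable {κ : Cardinal.{v}} {A : Type u} [Category.{v} A] [Preadditive A]
variable {E : Set (ShortComplex A)}

/-- Main lemma: in a locally coherent exact category, extensions of presentable
objects are presentable. -/
theorem presentable_ext (hκ : κ.IsRegular) [HasBinaryBiproducts A] {O : A} (hO : IsZero O)
    (hshape : ∀ (J : Type v) (_ : Preorder J), IsCardinalDirected κ J → HasColimitsOfShape J A)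
    (hE : IsExactStructure E) (hlc : IsLocallyCoherent κ E)
    {S : ShortComplex A} (memS : S ∈ E)
    (h1 : IsPresentable κ S.X₁) (h3 : IsPresentable κ S.X₃) : IsPresentable κ S.X₂ := by
  have kcS := hE.kerCoker _ memS
  have memS' : ShortComplex.mk S.f S.g S.zero ∈ E := memS
  obtain ⟨J, _, hJ, F, c, ⟨hcol⟩, hpt, hterms⟩ := (hlc S).mp memS
  haveI : HasColimitsOfShape J A := hshape J inferInstance hJ
  subst hpt
  have hcol₃ : IsColimit ((ShortComplex.π₃ (C := A)).mapCocone c) :=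
    isColimitOfPreserves _ hcol
  -- a splitting of the third component at some index j
  obtain ⟨j, u'', hu''⟩ := pres_factor h3 hJ hcol₃ (𝟙 c.pt.X₃)
  have hu''c : u'' ≫ (c.ι.app j).τ₃ = 𝟙 c.pt.X₃ := hu''
  have memj : ShortComplex.mk (F.obj j).f (F.obj j).g (F.obj j).zero ∈ E := (hterms j).1
  -- pull back `F.obj j` along `u''`
  obtain ⟨C, pX, pB, χ, kC, wδ, wχ, pb, memδ, memχ, hχB, hkCf, hkCs⟩ :=
    pb_package hE memj u'' hO
  -- `C` is presentable by coherence
  have hCpres : IsPresentable κ C := by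
    refine presentable_ker hκ hshape hE hlc memδ ?_ ?_
    · exact isPresentable_biprod hκ (hterms j).2.2.1 h3
    · exact (hterms j).2.2.2
  -- push out along the colimit coprojection on first components
  obtain ⟨P, iC, iA', π, wπ, po, memπ, hiCπ⟩ := po_package hE memχ ((c.ι.app j).τ₁)
  have hPpres : IsPresentable κ P :=
    isPresentable_isPushout hκ po (hterms j).2.1 hCpres h1
  -- naturality helpers
  have hcomm12 : (c.ι.app j).τ₁ ≫ c.pt.f = (F.obj j).f ≫ (c.ι.app j).τ₂ :=
    (c.ι.app j).comm₁₂
  have hcomm23 : (c.ι.app j).τ₂ ≫ c.pt.g = (F.obj j).g ≫ (c.ι.app j).τ₃ :=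
    (c.ι.app j).comm₂₃
  -- the comparison map `p : P ⟶ c.pt.X₂`
  have hcond : χ ≫ pB ≫ (c.ι.app j).τ₂ = (c.ι.app j).τ₁ ≫ c.pt.f := by
    rw [← Category.assoc, hχB, hcomm12]
  set p : P ⟶ c.pt.X₂ := po.desc (pB ≫ (c.ι.app j).τ₂) c.pt.f hcond with hpdef
  have hiCp : iC ≫ p = pB ≫ (c.ι.app j).τ₂ := po.inl_desc _ _ _
  have hiA'p : iA' ≫ p = c.pt.f := po.inr_desc _ _ _
  have hpg : p ≫ c.pt.g = π := by
    apply po.hom_ext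
    · rw [← Category.assoc, hiCp, Category.assoc, hcomm23, ← Category.assoc, ← pb.w]
      exact (Category.assoc _ _ _).trans ((congrArg (fun q => pX ≫ q) hu''c).trans ((Category.comp_id _).trans hiCπ.symm))
    · rw [← Category.assoc, hiA'p, c.pt.zero, wπ]
  -- first pullback: of `c.pt.g` along `π`
  obtain ⟨Q₂, qP, qA, χ₂, kC₂, wδ₂, wχ₂, pb₂, memδ₂, memχ₂, hχ₂A, hkC₂f, hkC₂s⟩ :=
    pb_package hE memS' π hO
  -- the section of `qP` coming from `p`
  set s₂ : P ⟶ Q₂ := pb₂.lift (𝟙 P) p (by rw [Category.id_comp, hpg]) with hs₂def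
  have hs₂P : s₂ ≫ qP = 𝟙 P := pb₂.lift_fst _ _ _
  have hQ₂pres : IsPresentable κ Q₂ :=
    isPresentable_split hκ (hE.kerCoker _ memχ₂) s₂ hs₂P h1 hPpres
  -- second pullback: of `π` along `c.pt.g`, giving an admissible epi onto `c.pt.X₂`
  obtain ⟨Q₁, qX₁, qP₁, χ₁, kC₁, wδ₁, wχ₁, pb₁, memδ₁, memχ₁, hχ₁P, hkC₁f, hkC₁s⟩ :=
    pb_package hE memπ (c.pt.g) hO
  have hQ₁pres : IsPresentable κ Q₁ :=
    isPresentable_of_iso hκ (pb₂.isoIsPullback _ _ pb₁.flip) hQ₂pres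
  -- conclude: `c.pt.X₂` is the cokernel of `χ₁ : c.pt.X₁ ⟶ Q₁`
  obtain ⟨hcoker⟩ := (hE.kerCoker _ memχ₁).2
  exact isPresentable_cokernel hκ hcoker h1 hQ₁pres

end Ext

end LocCoh

open LocCoh

theorem statement_2 (κ : Cardinal.{v}) (hκ : κ.IsRegular)
    (A : Type u) [Category.{v} A] [Preadditive A] [HasFiniteBiproducts A]
    (E : Set (ShortComplex A)) (hacc : IsAccessibleCat κ A)
    (hE : IsExactStructure E) (hlc : IsLocallyCoherent κ E) :
    (∀ S ∈ E, IsPresentable κ S.X₁ → IsPresentable κ S.X₃ → IsPresentable κ S.X₂)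
    ∧ IsExactStructure (restrictSES (κ := κ) E) := by
  obtain ⟨O, hO⟩ := HasZeroObject.zero (C := A)
  haveI : HasBinaryBiproducts A := hasBinaryBiproducts_of_finite_biproducts A
  have hshape := hacc.hasColimitsOfShape
  -- closure properties of presentable objects
  have closκ : ∀ {T : ShortComplex A}, T ∈ E → IsPresentable κ T.X₂ →
      IsPresentable κ T.X₃ → IsPresentable κ T.X₁ :=
    fun memT => presentable_ker hκ hshape hE hlc memT
  have closE : ∀ {T : ShortComplex A}, T ∈ E → IsPresentable κ T.X₁ →
      IsPresentable κ T.X₃ → IsPresentable κ T.X₂ :=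
    fun memT => presentable_ext hκ hO hshape hE hlc memT
  have closC : ∀ {T : ShortComplex A}, T ∈ E → IsPresentable κ T.X₁ →
      IsPresentable κ T.X₂ → IsPresentable κ T.X₃ := by
    intro T memT ht1 ht2
    obtain ⟨hcoker⟩ := (hE.kerCoker _ memT).2
    exact isPresentable_cokernel hκ hcoker ht1 ht2
  refine ⟨fun S memS => closE memS, ?_⟩
  set E₀ : Set (ShortComplex (PresSub κ A)) := restrictSES (κ := κ) E with hE₀def
  have memE : ∀ {S₀ : ShortComplex (PresSub κ A)}, S₀ ∈ E₀ → (inclSC κ A).obj S₀ ∈ E :=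
    fun h => h
  constructor
  -- kerCoker
  · intro S₀ mem
    constructor
    · obtain ⟨hlim⟩ := (hE.kerCoker _ (memE mem)).1
      refine ⟨KernelFork.IsLimit.ofι _ _
        (fun {W'} u hu => ObjectProperty.homMk (KernelFork.IsLimit.lift' hlim u.hom (congrArg (fun q => q.hom) hu)).1)
        (fun {W'} u hu => by
          have h2 := (KernelFork.IsLimit.lift' hlim u.hom (congrArg (fun q => q.hom) hu)).2
          ext; exact h2)
        (fun {W'} u hu m hm => by
          ext
          exact Fork.IsLimit.hom_ext hlim (by
          have h2 := (KernelFork.IsLimit.lift' hlim u.hom (congrArg (fun q => q.hom) hu)).2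
          exact (congrArg (fun q => q.hom) hm).trans h2.symm))⟩
    · obtain ⟨hcolim⟩ := (hE.kerCoker _ (memE mem)).2
      refine ⟨CokernelCofork.IsColimit.ofπ _ _
        (fun {W'} u hu => ObjectProperty.homMk (CokernelCofork.IsColimit.desc' hcolim u.hom (congrArg (fun q => q.hom) hu)).1)
        (fun {W'} u hu => by
          have h2 := (CokernelCofork.IsColimit.desc' hcolim u.hom (congrArg (fun q => q.hom) hu)).2
          ext; exact h2)
        (fun {W'} u hu m hm => by
          ext
          exact Cofork.IsColimit.hom_ext hcolim (by
          have h2 := (CokernelCofork.IsColimit.desc' hcolim u.hom (congrArg (fun q => q.hom) hu)).2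
          exact (congrArg (fun q => q.hom) hm).trans h2.symm))⟩
  -- mem_of_iso
  · intro S₀ T₀ e mem
    exact hE.mem_of_iso _ _ ((inclSC κ A).mapIso e) (memE mem)
  -- id_mono
  · intro X₀
    obtain ⟨Z, g, w, mem⟩ := hE.id_mono X₀.obj
    have hZ : IsZero Z := isZero_of_coker_id (hE.kerCoker _ mem)
    exact ⟨⟨Z, isPresentable_of_isZero hκ hZ⟩, ObjectProperty.homMk g, by ext; exact w, mem⟩
  -- id_epi
  · intro X₀
    obtain ⟨K, f, w, mem⟩ := hE.id_epi X₀.obj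
    have hK : IsZero K := isZero_of_ker_id (hE.kerCoker _ mem)
    exact ⟨⟨K, isPresentable_of_isZero hκ hK⟩, ObjectProperty.homMk f, by ext; exact w, mem⟩
  -- mono_comp
  · intro X₀ Y₀ Z₀ f g hf hg
    obtain ⟨Wf, ef, wf, memf⟩ := hf
    obtain ⟨Wg, eg, wg, memg⟩ := hg
    obtain ⟨V, e', w', memV⟩ := hE.mono_comp (X := X₀.obj) (Y := Y₀.obj) (Z := Z₀.obj)
      f.hom g.hom ⟨Wf.obj, ef.hom, congrArg (fun q => q.hom) wf, memf⟩
      ⟨Wg.obj, eg.hom, congrArg (fun q => q.hom) wg, memg⟩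
    have hV : IsPresentable κ V := closC memV X₀.property Z₀.property
    exact ⟨⟨V, hV⟩, ObjectProperty.homMk e', by ext; exact w', memV⟩
  -- epi_comp
  · intro X₀ Y₀ Z₀ f g hf hg
    obtain ⟨Kf, kf, wf, memf⟩ := hf
    obtain ⟨Kg, kg, wg, memg⟩ := hg
    obtain ⟨K, k, w', memK⟩ := hE.epi_comp (X := X₀.obj) (Y := Y₀.obj) (Z := Z₀.obj)
      f.hom g.hom ⟨Kf.obj, kf.hom, congrArg (fun q => q.hom) wf, memf⟩
      ⟨Kg.obj, kg.hom, congrArg (fun q => q.hom) wg, memg⟩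
    have hK : IsPresentable κ K := closκ memK X₀.property Z₀.property
    exact ⟨⟨K, hK⟩, ObjectProperty.homMk k, by ext; exact w', memK⟩
  -- pushout_mono
  · intro X₀ Y₀ Z₀ f hf h
    obtain ⟨Wf, ef, wf, memf⟩ := hf
    obtain ⟨W, h', f', po, hadm⟩ := hE.pushout_mono (X := X₀.obj) (Y := Y₀.obj)
      (Z := Z₀.obj) f.hom ⟨Wf.obj, ef.hom, congrArg (fun q => q.hom) wf, memf⟩ h.hom
    have hW : IsPresentable κ W :=
      isPresentable_isPushout hκ po X₀.property Y₀.property Z₀.property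
    obtain ⟨V, e', w', memV⟩ := hadm
    have hV : IsPresentable κ V := closC memV Z₀.property hW
    refine ⟨⟨W, hW⟩, ObjectProperty.homMk h', ObjectProperty.homMk f', ?_,
      ⟨⟨V, hV⟩, ObjectProperty.homMk e', by ext; exact w', memV⟩⟩
    refine isPushout_mk (A := PresSub κ A) (P := ⟨W, hW⟩) f h
      (ObjectProperty.homMk h') (ObjectProperty.homMk f') ?_
      (fun {T} a b w'' => ObjectProperty.homMk
        (po.desc a.hom b.hom (congrArg (fun q => q.hom) w''))) ?_ ?_ ?_
    · ext; exact po.w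
    · intro T a b w''; ext; exact po.inl_desc _ _ _
    · intro T a b w''; ext; exact po.inr_desc _ _ _
    · intro T m m' h1 h2; ext
      exact po.hom_ext (congrArg (fun q => q.hom) h1) (congrArg (fun q => q.hom) h2)
  -- pullback_epi
  · intro Y₀ Z₀ X₀ g hg h
    obtain ⟨K₀, k, wk, memk⟩ := hg
    obtain ⟨C, pX, pB, χ, kC, wδ, wχ, pb, memδ, memχ, hχB, hkCf, hkCs⟩ :=
      pb_package hE (kg := k.hom) (g := g.hom) (wg := congrArg (fun q => q.hom) wk) memk h.hom hO
    have hC : IsPresentable κ C := by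
      refine presentable_ker hκ hshape hE hlc memδ ?_ ?_
      · exact isPresentable_biprod hκ Y₀.property X₀.property
      · exact Z₀.property
    refine ⟨⟨C, hC⟩, ObjectProperty.homMk pX, ObjectProperty.homMk pB, ?_,
      ⟨K₀, ObjectProperty.homMk χ, by ext; exact wχ, memχ⟩⟩
    refine isPullback_mk (A := PresSub κ A) (P := ⟨C, hC⟩)
      (ObjectProperty.homMk pX) (ObjectProperty.homMk pB) h g ?_
      (fun {T} a b w'' => ObjectProperty.homMk
        (pb.lift a.hom b.hom (congrArg (fun q => q.hom) w''))) ?_ ?_ ?_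
    · ext; exact pb.w
    · intro T a b w''; ext; exact pb.lift_fst _ _ _
    · intro T a b w''; ext; exact pb.lift_snd _ _ _
    · intro T m m' h1 h2; ext
      exact pb.hom_ext (congrArg (fun q => q.hom) h1) (congrArg (fun q => q.hom) h2)
end

section
/- In any locally κ-coherent exact structure on a κ-accessible additive category A, the full subcategory A_{<κ} of κ-presentable objects is closed under the kernels of admissible epimorphisms and under the cokernels of admissible monomorphisms in A: if 0→C→D→E→0 is an admissible short exact sequence in A with D and E κ-presentable then C is κ-presentable, and if C and D are κ-presentable then E is κ-presentable. -/
universe w v u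

open CategoryTheory CategoryTheory.Limits Opposite

open LocCoh

section Aux

variable {κ : Cardinal.{v}}

lemma aux_nonempty (hκ : κ.IsRegular) {J : Type v} [Preorder J]
    (hJ : IsCardinalDirected κ J) : Nonempty J := by
  obtain ⟨j, -⟩ := hJ ∅ (by rw [Cardinal.mk_emptyCollection]; exact hκ.pos)
  exact ⟨j⟩

lemma aux_isDirected (hκ : κ.IsRegular) {J : Type v} [Preorder J]
    (hJ : IsCardinalDirected κ J) : IsDirected J (· ≤ ·) := by
  constructor
  intro a b
  obtain ⟨j, hj⟩ := hJ {a, b}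
    (lt_of_lt_of_le (Cardinal.mk_lt_aleph0_iff.mpr inferInstance) hκ.aleph0_le)
  exact ⟨j, hj a (by simp), hj b (by simp)⟩

/-- A retract of a `κ`-presentable object is `κ`-presentable. -/
lemma aux_isPresentable_of_retract (hκ : κ.IsRegular) {A : Type u} [Category.{v} A]
    {C C' : A} (i : C ⟶ C') (r : C' ⟶ C) (hir : i ≫ r = 𝟙 C)
    (h : IsPresentable κ C') : IsPresentable κ C := by
  intro J _pre hJ
  haveI : Nonempty J := aux_nonempty hκ hJ
  haveI : IsDirected J (· ≤ ·) := aux_isDirected hκ hJ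
  haveI := (h J ‹_› hJ).some
  refine ⟨⟨fun {F} => ⟨fun {c} hc => ⟨?_⟩⟩⟩⟩
  have hc' : IsColimit ((coyoneda.obj (op C')).mapCocone c) := isColimitOfPreserves _ hc
  apply Types.FilteredColimit.isColimitOf
  · intro x
    obtain ⟨j, y, hy⟩ := Types.jointly_surjective _ hc' (r ≫ x)
    refine ⟨j, i ≫ y, ?_⟩
    dsimp at hy ⊢
    rw [Category.assoc, hy, ← Category.assoc, hir, Category.id_comp]
  · intro j j' x y hxy
    dsimp at hxy
    obtain ⟨k, f, g, hfg⟩ := (Types.FilteredColimit.isColimit_eq_iff _ hc'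
      (xi := r ≫ x) (xj := r ≫ y)).1
      (by dsimp; rw [Category.assoc, Category.assoc, hxy])
    refine ⟨k, f, g, ?_⟩
    dsimp at hfg ⊢
    have hx : x ≫ F.map f = i ≫ ((r ≫ x) ≫ F.map f) := by
      rw [← Category.assoc, ← Category.assoc, hir, Category.id_comp]
    have hy2 : y ≫ F.map g = i ≫ ((r ≫ y) ≫ F.map g) := by
      rw [← Category.assoc, ← Category.assoc, hir, Category.id_comp]
    rw [hx, hy2, hfg]

/-- The cokernel of a morphism between `κ`-presentable objects is `κ`-presentable. -/
lemma aux_isPresentable_X₃ (hκ : κ.IsRegular) {A : Type u} [Category.{v} A] [Preadditive A]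
    {S : ShortComplex A} (hS : IsColimit (CokernelCofork.ofπ S.g S.zero))
    (h1 : IsPresentable κ S.X₁) (h2 : IsPresentable κ S.X₂) :
    IsPresentable κ S.X₃ := by
  intro J _pre hJ
  haveI : Nonempty J := aux_nonempty hκ hJ
  haveI : IsDirected J (· ≤ ·) := aux_isDirected hκ hJ
  haveI p1 := (h1 J ‹_› hJ).some
  haveI p2 := (h2 J ‹_› hJ).some
  refine ⟨⟨fun {F} => ⟨fun {c} hc => ⟨?_⟩⟩⟩⟩
  have hc1 : IsColimit ((coyoneda.obj (op S.X₁)).mapCocone c) := isColimitOfPreserves _ hc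
  have hc2 : IsColimit ((coyoneda.obj (op S.X₂)).mapCocone c) := isColimitOfPreserves _ hc
  apply Types.FilteredColimit.isColimitOf
  · intro x
    obtain ⟨j, y, hy⟩ := Types.jointly_surjective _ hc2 (S.g ≫ x)
    dsimp at hy
    obtain ⟨k, f, g, hfg⟩ := (Types.FilteredColimit.isColimit_eq_iff _ hc1
      (xi := S.f ≫ y) (xj := (0 : S.X₁ ⟶ F.obj j))).1
      (by
        dsimp
        rw [Category.assoc, hy, zero_comp, ← Category.assoc, S.zero, zero_comp])
    rw [Subsingleton.elim g f] at hfg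
    dsimp at hfg
    rw [zero_comp] at hfg
    obtain ⟨z, hz⟩ := CokernelCofork.IsColimit.desc' hS (y ≫ F.map f)
      (by rw [← Category.assoc]; exact hfg)
    rw [CokernelCofork.π_ofπ] at hz
    refine ⟨k, z, ?_⟩
    dsimp
    apply Cofork.IsColimit.hom_ext hS
    rw [Cofork.π_ofπ, ← Category.assoc, hz, Category.assoc, c.w f, hy]
  · intro j j' x y hxy
    dsimp at hxy
    obtain ⟨k, f, g, hfg⟩ := (Types.FilteredColimit.isColimit_eq_iff _ hc2
      (xi := S.g ≫ x) (xj := S.g ≫ y)).1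
      (by dsimp; rw [Category.assoc, Category.assoc, hxy])
    refine ⟨k, f, g, ?_⟩
    dsimp at hfg ⊢
    apply Cofork.IsColimit.hom_ext hS
    rw [Cofork.π_ofπ, ← Category.assoc, ← Category.assoc]
    exact hfg

end Aux

theorem statement_4 (κ : Cardinal.{v}) (hκ : κ.IsRegular)
    (A : Type u) [Category.{v} A] [Preadditive A] [HasFiniteBiproducts A]
    (E : Set (ShortComplex A)) (hacc : IsAccessibleCat κ A)
    (hE : IsExactStructure E) (hlc : IsLocallyCoherent κ E) :
    ∀ S ∈ E, (IsPresentable κ S.X₂ → IsPresentable κ S.X₃ → IsPresentable κ S.X₁)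
      ∧ (IsPresentable κ S.X₁ → IsPresentable κ S.X₂ → IsPresentable κ S.X₃) := by
  intro S hS
  constructor
  · -- kernel part
    intro h2 h3
    obtain ⟨J, _pre, hJ, F, c, ⟨hcolim⟩, hpt, hterms⟩ := (hlc S).1 hS
    subst hpt
    haveI : Nonempty J := aux_nonempty hκ hJ
    haveI : IsDirected J (· ≤ ·) := aux_isDirected hκ hJ
    haveI : HasColimitsOfShape J A := hacc.hasColimitsOfShape J ‹_› hJ
    have hc2 : IsColimit (ShortComplex.π₂.mapCocone c) := isColimitOfPreserves _ hcolim
    have hc3 : IsColimit (ShortComplex.π₃.mapCocone c) := isColimitOfPreserves _ hcolim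
    haveI p2 := (h2 J ‹_› hJ).some
    haveI p3 := (h3 J ‹_› hJ).some
    have hcc2 : IsColimit ((coyoneda.obj (op c.pt.X₂)).mapCocone
        (ShortComplex.π₂.mapCocone c)) := isColimitOfPreserves _ hc2
    have hcc3 : IsColimit ((coyoneda.obj (op c.pt.X₃)).mapCocone
        (ShortComplex.π₃.mapCocone c)) := isColimitOfPreserves _ hc3
    have hcc23 : IsColimit ((coyoneda.obj (op c.pt.X₂)).mapCocone
        (ShortComplex.π₃.mapCocone c)) := isColimitOfPreserves _ hc3
    obtain ⟨j, s, hs⟩ := Types.jointly_surjective _ hcc2 (𝟙 c.pt.X₂)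
    obtain ⟨k, t, ht⟩ := Types.jointly_surjective _ hcc3 (𝟙 c.pt.X₃)
    dsimp at hs ht
    obtain ⟨m, hjm, hkm⟩ := directed_of (· ≤ ·) j k
    set s₁ : c.pt.X₂ ⟶ (F.obj m).X₂ := s ≫ (F.map (homOfLE hjm)).τ₂ with hs₁def
    set t₁ : c.pt.X₃ ⟶ (F.obj m).X₃ := t ≫ (F.map (homOfLE hkm)).τ₃ with ht₁def
    have hs₁ : s₁ ≫ (c.ι.app m).τ₂ = 𝟙 c.pt.X₂ := by
      rw [hs₁def]
      exact (Category.assoc (X := (F.obj j).X₂) s (F.map (homOfLE hjm)).τ₂ (c.ι.app m).τ₂).trans (by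
        rw [← ShortComplex.comp_τ₂, c.w (homOfLE hjm)]
        exact hs)
    have ht₁ : t₁ ≫ (c.ι.app m).τ₃ = 𝟙 c.pt.X₃ := by
      rw [ht₁def]
      exact (Category.assoc (X := (F.obj k).X₃) t (F.map (homOfLE hkm)).τ₃ (c.ι.app m).τ₃).trans (by
        rw [← ShortComplex.comp_τ₃, c.w (homOfLE hkm)]
        exact ht)
    obtain ⟨n, f₁, f₂, hfg⟩ := (Types.FilteredColimit.isColimit_eq_iff _ hcc23
      (xi := s₁ ≫ (F.obj m).g) (xj := c.pt.g ≫ t₁)).1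
      (by
        show (s₁ ≫ (F.obj m).g) ≫ (c.ι.app m).τ₃ = (c.pt.g ≫ t₁) ≫ (c.ι.app m).τ₃
        have hcomm : (c.ι.app m).τ₂ ≫ c.pt.g = (F.obj m).g ≫ (c.ι.app m).τ₃ :=
          (c.ι.app m).comm₂₃
        rw [Category.assoc, ← hcomm, ← Category.assoc, hs₁, Category.id_comp,
          Category.assoc, ht₁, Category.comp_id])
    rw [Subsingleton.elim f₂ f₁] at hfg
    have hfg' : (s₁ ≫ (F.obj m).g) ≫ (F.map f₁).τ₃ = (c.pt.g ≫ t₁) ≫ (F.map f₁).τ₃ := hfg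
    set s₂ : c.pt.X₂ ⟶ (F.obj n).X₂ := s₁ ≫ (F.map f₁).τ₂ with hs₂def
    set t₂ : c.pt.X₃ ⟶ (F.obj n).X₃ := t₁ ≫ (F.map f₁).τ₃ with ht₂def
    have hkey : s₂ ≫ (F.obj n).g = c.pt.g ≫ t₂ := by
      rw [hs₂def, ht₂def, Category.assoc, (F.map f₁).comm₂₃, ← Category.assoc, hfg',
        Category.assoc]
    have hs₂ : s₂ ≫ (c.ι.app n).τ₂ = 𝟙 c.pt.X₂ := by
      rw [hs₂def, Category.assoc, ← ShortComplex.comp_τ₂, c.w f₁]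
      exact hs₁
    have hKn : IsLimit (KernelFork.ofι (F.obj n).f (F.obj n).zero) :=
      (hE.kerCoker _ (hterms n).1).1.some
    obtain ⟨u, hu⟩ := KernelFork.IsLimit.lift' hKn (c.pt.f ≫ s₂)
      (by rw [Category.assoc, hkey, ← Category.assoc, c.pt.zero, zero_comp])
    rw [Fork.ι_ofι] at hu
    have hKS : IsLimit (KernelFork.ofι c.pt.f c.pt.zero) := (hE.kerCoker _ hS).1.some
    have hcomm12 : (c.ι.app n).τ₁ ≫ c.pt.f = (F.obj n).f ≫ (c.ι.app n).τ₂ :=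
      (c.ι.app n).comm₁₂
    have hret : u ≫ (c.ι.app n).τ₁ = 𝟙 c.pt.X₁ := by
      apply Fork.IsLimit.hom_ext hKS
      rw [Fork.ι_ofι, Category.id_comp, Category.assoc, hcomm12,
        ← Category.assoc, hu, Category.assoc, hs₂, Category.comp_id]
    exact aux_isPresentable_of_retract hκ u ((c.ι.app n).τ₁) hret (hterms n).2.1
  · -- cokernel part
    intro h1 h2
    exact aux_isPresentable_X₃ hκ (hE.kerCoker S hS).2.some h1 h2
end

section
/- Let A be a locally κ-coherent exact category and C→D a morphism in A. Then C→D is an admissible monomorphism in A if and only if every morphism in the category of morphisms M²(A) from a morphism S→T with S and T κ-presentable to the morphism C→D factorizes through a morphism U→V that is an admissible monomorphism in the exact category structure on A_{<κ} inherited from A. -/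
universe w v u

open CategoryTheory CategoryTheory.Limits Opposite

open LocCoh

namespace LocCohAux

open CategoryTheory CategoryTheory.Limits Opposite

variable {κ : Cardinal.{v}}

section Pre

variable {J : Type v} [Preorder J]

theorem nonempty_of_dir (hκ : κ.IsRegular) (hJ : IsCardinalDirected κ J) : Nonempty J := by
  obtain ⟨j, -⟩ := hJ ∅ (by
    simpa using lt_of_lt_of_le Cardinal.aleph0_pos hκ.aleph0_le)
  exact ⟨j⟩

theorem bound_fam (hJ : IsCardinalDirected κ J) {ι : Type v} (hι : Cardinal.mk ι < κ)
    (f : ι → J) : ∃ j, ∀ i, f i ≤ j := by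
  obtain ⟨j, hj⟩ := hJ (Set.range f) (lt_of_le_of_lt Cardinal.mk_range_le hι)
  exact ⟨j, fun i => hj _ ⟨i, rfl⟩⟩

theorem directed_of_dir (hκ : κ.IsRegular) (hJ : IsCardinalDirected κ J) :
    IsDirected J (· ≤ ·) := by
  constructor
  intro a b
  obtain ⟨j, hj⟩ := hJ {a, b}
    (lt_of_lt_of_le (((Set.finite_singleton b).insert a).lt_aleph0) hκ.aleph0_le)
  exact ⟨j, hj a (by simp), hj b (by simp)⟩

theorem bound_pair (hκ : κ.IsRegular) (hJ : IsCardinalDirected κ J) (a b : J) :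
    ∃ j, a ≤ j ∧ b ≤ j :=
  (directed_of_dir hκ hJ).directed a b

theorem mapHomOfLE_comp {B : Type u₂} [Category.{v₂} B] (F : J ⥤ B) {x y z : J}
    (h1 : x ≤ y) (h2 : y ≤ z) :
    F.map (homOfLE h1) ≫ F.map (homOfLE h2) = F.map (homOfLE (h1.trans h2)) := by
  rw [← F.map_comp, homOfLE_comp]

section
variable {A : Type u} [Category.{v} A]

theorem exists_factor (hκ : κ.IsRegular) {S : A} (hS : IsPresentable κ S)
    (hJ : IsCardinalDirected κ J) {F : J ⥤ A} {c : Cocone F} (hc : IsColimit c)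
    (f : S ⟶ c.pt) : ∃ (j : J) (g : S ⟶ F.obj j), g ≫ c.ι.app j = f := by
  haveI := (hS J inferInstance hJ).some
  have hc' := isColimitOfPreserves (coyoneda.obj (op S)) hc
  obtain ⟨j, y, hy⟩ := Types.jointly_surjective_of_isColimit hc' f
  exact ⟨j, y, hy⟩

theorem exists_equalize (hκ : κ.IsRegular) {S : A} (hS : IsPresentable κ S)
    (hJ : IsCardinalDirected κ J) {F : J ⥤ A} {c : Cocone F} (hc : IsColimit c)
    {j : J} {g g' : S ⟶ F.obj j} (h : g ≫ c.ι.app j = g' ≫ c.ι.app j) :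
    ∃ (j' : J) (hj : j ≤ j'),
      g ≫ F.map (homOfLE hj) = g' ≫ F.map (homOfLE hj) := by
  haveI := directed_of_dir hκ hJ
  haveI := nonempty_of_dir hκ hJ
  haveI := (hS J inferInstance hJ).some
  have hc' := isColimitOfPreserves (coyoneda.obj (op S)) hc
  have h2 := (Types.FilteredColimit.isColimit_eq_iff
      (F ⋙ coyoneda.obj (op S)) hc' (i := j) (j := j) (xi := g) (xj := g')).mp h
  obtain ⟨k, f1, f2, hk⟩ := h2
  refine ⟨k, leOfHom f1, ?_⟩
  have hf : f2 = f1 := Subsingleton.elim _ _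
  rw [hf] at hk
  exact hk

end

end Pre

end LocCohAux

namespace LocCohAux

section Ref

variable {P : Type v} [Preorder P] {O : Type v} [Preorder O]

/-- Refinement index: pairs `(p, x)` with a relation driven by `hat`. -/
structure RefHat (hat : P → P) (O : Type v) : Type v where
  base : P
  lvl : O

variable {hat : P → P}

instance : Preorder (RefHat (P := P) hat O) where
  le q q' := q = q' ∨ (q.base ≤ hat q.base ∧ hat q.base ≤ q'.base ∧ q.lvl < q'.lvl)
  le_refl q := Or.inl rfl
  le_trans q q' q'' h h' := by
    rcases h with rfl | ⟨h1, h2, h3⟩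
    · exact h'
    rcases h' with rfl | ⟨h1', h2', h3'⟩
    · exact Or.inr ⟨h1, h2, h3⟩
    · exact Or.inr ⟨h1, h2.trans (h1'.trans h2'), h3.trans h3'⟩

theorem RefHat.le_def {q q' : RefHat (P := P) hat O} :
    q ≤ q' ↔ q = q' ∨ (q.base ≤ hat q.base ∧ hat q.base ≤ q'.base ∧ q.lvl < q'.lvl) :=
  Iff.rfl

theorem RefHat.base_le_of_hom {q q' : RefHat (P := P) hat O} (h : q ⟶ q') (hne : q ≠ q') :
    hat q.base ≤ q'.base := ((leOfHom h).resolve_left hne).2.1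

theorem RefHat.lvl_lt_of_hom {q q' : RefHat (P := P) hat O} (h : q ⟶ q') (hne : q ≠ q') :
    q.lvl < q'.lvl := ((leOfHom h).resolve_left hne).2.2

variable {B : Type u₂} [Category.{v₂} B]
variable (F : P ⥤ B) (G₀ : P → B)
variable (α : ∀ p, F.obj p ⟶ G₀ p) (β : ∀ p, G₀ p ⟶ F.obj (hat p))

open scoped Classical in
/-- the map component of the refined functor -/
noncomputable def refMap {q q' : RefHat (P := P) hat O} (h : q ⟶ q') : G₀ q.base ⟶ G₀ q'.base :=
  if e : q = q' then eqToHom (by rw [e])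
  else β q.base ≫ F.map (homOfLE (RefHat.base_le_of_hom h e)) ≫ α q'.base

theorem refMap_self {q q' : RefHat (P := P) hat O} (h : q ⟶ q') (e : q = q') :
    refMap F G₀ α β h = eqToHom (by rw [e]) := dif_pos e

theorem refMap_ne {q q' : RefHat (P := P) hat O} (h : q ⟶ q') (e : q ≠ q')
    (hb : hat q.base ≤ q'.base) :
    refMap F G₀ α β h = β q.base ≫ F.map (homOfLE hb) ≫ α q'.base := dif_neg e

variable (hle : ∀ p, p ≤ hat p)
variable (hαβ : ∀ p, α p ≫ β p = F.map (homOfLE (hle p)))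

/-- The refined functor. -/
noncomputable def refFunctor : RefHat (P := P) hat O ⥤ B where
  obj q := G₀ q.base
  map h := refMap F G₀ α β h
  map_id q := by
    show refMap F G₀ α β (𝟙 q) = 𝟙 (G₀ q.base)
    rw [refMap_self _ _ _ _ (𝟙 q) rfl]; simp
  map_comp {q q' q''} h h' := by
    show refMap F G₀ α β (h ≫ h') = refMap F G₀ α β h ≫ refMap F G₀ α β h'
    by_cases e : q = q'
    · subst e
      rw [Subsingleton.elim (h ≫ h') h', refMap_self F G₀ α β h rfl]
      simp
    · by_cases e' : q' = q''
      · subst e'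
        rw [Subsingleton.elim (h ≫ h') h, refMap_self F G₀ α β h' rfl]
        simp
      · have hne : q ≠ q'' := by
          intro he
          have l1 := RefHat.lvl_lt_of_hom h e
          have l2 := RefHat.lvl_lt_of_hom h' e'
          rw [he] at l1
          exact absurd (l1.trans l2) (lt_irrefl _)
        have hb1 := RefHat.base_le_of_hom h e
        have hb2 := RefHat.base_le_of_hom h' e'
        have hb3 : hat q.base ≤ q''.base := hb1.trans ((hle q'.base).trans hb2)
        rw [refMap_ne F G₀ α β h e hb1, refMap_ne F G₀ α β h' e' hb2,
          refMap_ne F G₀ α β (h ≫ h') hne hb3]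
        simp only [Category.assoc]
        congr 1
        have h5 : α q'.base ≫ β q'.base ≫ F.map (homOfLE hb2) ≫ α q''.base
            = F.map (homOfLE ((hle q'.base).trans hb2)) ≫ α q''.base := by
          slice_lhs 1 2 => rw [hαβ q'.base]
          slice_lhs 1 2 => rw [mapHomOfLE_comp]
        rw [h5]
        slice_rhs 1 2 => rw [mapHomOfLE_comp]

theorem ref_claim (ν : Cocone (refFunctor (O := O) F G₀ α β hle hαβ)) {p q : P} (hpq : hat p ≤ q)
    {x y : O} (hxy : x < y) :
    α p ≫ ν.ι.app ⟨p, x⟩ = F.map (homOfLE ((hle p).trans hpq)) ≫ α q ≫ ν.ι.app ⟨q, y⟩ := by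
  have hne : (RefHat.mk p x : RefHat hat O) ≠ ⟨q, y⟩ := by
    intro he
    have hxy' : x = y := congrArg RefHat.lvl he
    rw [hxy'] at hxy
    exact absurd hxy (lt_irrefl y)
  have hhom : (⟨p, x⟩ : RefHat hat O) ⟶ ⟨q, y⟩ := homOfLE (Or.inr ⟨hle p, hpq, hxy⟩)
  have hw := ν.w hhom
  have key : ∀ {X : B} (m : G₀ q ⟶ X), α p ≫ (β p ≫ F.map (homOfLE hpq) ≫ α q) ≫ m =
      F.map (homOfLE ((hle p).trans hpq)) ≫ α q ≫ m := by
    intro X m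
    rw [← Category.assoc (α p), ← Category.assoc (α p), hαβ p,
      ← Category.assoc (F.map (homOfLE (hle p))), mapHomOfLE_comp, Category.assoc]
  rw [← hw]
  show α p ≫ refMap F G₀ α β hhom ≫ _ = _
  rw [refMap_ne F G₀ α β hhom hne hpq]
  exact key (ν.ι.app ⟨q, y⟩)

attribute [reducible] refFunctor

/-- The canonical cocone on the refined functor. -/
@[simps]
noncomputable def refCocone (c : Cocone F) : Cocone (refFunctor (O := O) F G₀ α β hle hαβ) where
  pt := c.pt
  ι :=
    { app := fun q => β q.base ≫ c.ι.app (hat q.base)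
      naturality := fun q q' h => by
        by_cases e : q = q'
        · subst e
          have he : h = 𝟙 q := Subsingleton.elim _ _
          subst he
          simp [refMap_self F G₀ α β (𝟙 q) rfl]
        · have hb := RefHat.base_le_of_hom h e
          show refMap F G₀ α β h ≫ _ = _ ≫ _
          rw [refMap_ne F G₀ α β h e hb]
          simp only [Functor.const_obj_obj, Functor.const_obj_map, Category.comp_id,
            Category.assoc]
          slice_lhs 3 4 => rw [hαβ q'.base]
          slice_lhs 2 3 => rw [mapHomOfLE_comp]
          slice_lhs 2 3 => rw [Cocone.w c] }

/-- The cocone on `F` induced by a cocone on the refined functor. -/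
@[simps]
noncomputable def refDescCocone (hdir : ∀ a b : P, ∃ z, a ≤ z ∧ b ≤ z) (x₀ : O)
    (hO : ∀ a b : O, ∃ z, a < z ∧ b < z)
    (ν : Cocone (refFunctor (O := O) F G₀ α β hle hαβ)) : Cocone F where
  pt := ν.pt
  ι :=
    { app := fun p => α p ≫ ν.ι.app ⟨p, x₀⟩
      naturality := fun p p' f => by
        simp only [Functor.const_obj_obj, Functor.const_obj_map, Category.comp_id]
        obtain ⟨z, hz1, hz2⟩ := hdir (hat p) (hat p')
        obtain ⟨y, hy1, -⟩ := hO x₀ x₀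
        rw [ref_claim F G₀ α β hle hαβ ν hz1 hy1, ref_claim F G₀ α β hle hαβ ν hz2 hy1]
        have hf : f = homOfLE (leOfHom f) := Subsingleton.elim _ _
        rw [hf]
        slice_lhs 1 2 => rw [mapHomOfLE_comp]
        simp only [Category.assoc] }

attribute [reducible] refCocone refDescCocone

/-- The canonical cocone on the refined functor is a colimit cocone. -/
noncomputable def refIsColimit (c : Cocone F) (hc : IsColimit c)
    (hdir : ∀ a b : P, ∃ z, a ≤ z ∧ b ≤ z) (x₀ : O)
    (hO : ∀ a b : O, ∃ z, a < z ∧ b < z) :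
    IsColimit (refCocone (O := O) F G₀ α β hle hαβ c) where
  desc ν := hc.desc (refDescCocone F G₀ α β hle hαβ hdir x₀ hO ν)
  fac ν q := by
    obtain ⟨p, x⟩ := q
    show (β p ≫ c.ι.app (hat p)) ≫ _ = _
    rw [Category.assoc, hc.fac]
    simp only [refDescCocone_ι_app]
    obtain ⟨z, hz1, hz2⟩ := hdir (hat p) (hat (hat p))
    obtain ⟨y, hy1, hy2⟩ := hO x x₀
    rw [ref_claim F G₀ α β hle hαβ ν (p := hat p) (q := z) hz2 hy2]
    have hhom : (⟨p, x⟩ : RefHat hat O) ⟶ ⟨z, y⟩ := homOfLE (Or.inr ⟨hle p, hz1, hy1⟩)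
    have hne : (⟨p, x⟩ : RefHat hat O) ≠ ⟨z, y⟩ := by
      intro he
      have hxy' : x = y := congrArg RefHat.lvl he
      rw [hxy'] at hy1
      exact absurd hy1 (lt_irrefl y)
    rw [← ν.w hhom]
    show _ = refMap F G₀ α β hhom ≫ _
    rw [refMap_ne F G₀ α β hhom hne hz1]
    simp only [Category.assoc]
  uniq ν m hm := by
    refine hc.uniq (refDescCocone F G₀ α β hle hαβ hdir x₀ hO ν) m fun p => ?_
    have hι : c.ι.app p = α p ≫ β p ≫ c.ι.app (hat p) := by
      rw [← Category.assoc, hαβ, Cocone.w]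
    have hm' := hm ⟨p, x₀⟩
    simp only [refCocone_ι_app] at hm'
    simp only [Category.assoc] at hm'
    simp only [refDescCocone_ι_app]
    rw [hι]
    simp only [Category.assoc]
    rw [hm']

/-- Natural transformations between refined functors. -/
noncomputable def refNatTrans {F' : P ⥤ B} {G₀' : P → B}
    (α' : ∀ p, F'.obj p ⟶ G₀' p) (β' : ∀ p, G₀' p ⟶ F'.obj (hat p))
    (hαβ' : ∀ p, α' p ≫ β' p = F'.map (homOfLE (hle p)))
    (θ : F ⟶ F') (t₀ : ∀ p, G₀ p ⟶ G₀' p)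
    (sq1 : ∀ p, α p ≫ t₀ p = θ.app p ≫ α' p)
    (sq2 : ∀ p, β p ≫ θ.app (hat p) = t₀ p ≫ β' p) :
    refFunctor (O := O) F G₀ α β hle hαβ ⟶ refFunctor (O := O) F' G₀' α' β' hle hαβ' where
  app q := t₀ q.base
  naturality q q' h := by
    by_cases e : q = q'
    · subst e
      have he : h = 𝟙 q := Subsingleton.elim _ _
      subst he
      simp [refMap_self F G₀ α β (𝟙 q) rfl, refMap_self F' G₀' α' β' (𝟙 q) rfl]
    · have hb := RefHat.base_le_of_hom h e
      show refMap F G₀ α β h ≫ _ = _ ≫ refMap F' G₀' α' β' h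
      rw [refMap_ne F G₀ α β h e hb, refMap_ne F' G₀' α' β' h e hb]
      simp only [Category.assoc]
      rw [sq1 q'.base]
      slice_lhs 2 3 => rw [θ.naturality]
      slice_lhs 1 2 => rw [sq2 q.base]
      simp only [Category.assoc]


end Ref

section Coker

variable {A : Type u} [Category.{v} A] [Preadditive A]
variable {Q : Type v} [Preorder Q] (U V : Q ⥤ A) (u : U ⟶ V)
variable (W₀ : Q → A) (g₀ : ∀ q, V.obj q ⟶ W₀ q)

theorem coker_cond (w₀ : ∀ q, u.app q ≫ g₀ q = 0) {q q' : Q} (h : q ⟶ q') :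
    u.app q ≫ V.map h ≫ g₀ q' = 0 := by
  rw [← Category.assoc, ← u.naturality h, Category.assoc, w₀ q', comp_zero]

variable (w₀ : ∀ q, u.app q ≫ g₀ q = 0)
variable (cok : ∀ q, IsColimit (CokernelCofork.ofπ (g₀ q) (w₀ q)))

/-- The functor of cokernels of a natural transformation. -/
noncomputable def cokerFunctor : Q ⥤ A where
  obj q := W₀ q
  map {q q'} h := (CokernelCofork.IsColimit.desc' (cok q) (V.map h ≫ g₀ q')
    (coker_cond U V u W₀ g₀ w₀ h)).1
  map_id q := by
    apply Cofork.IsColimit.hom_ext (cok q)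
    have h2 := (CokernelCofork.IsColimit.desc' (cok q) (V.map (𝟙 q) ≫ g₀ q)
      (coker_cond U V u W₀ g₀ w₀ (𝟙 q))).2
    simp only [CokernelCofork.π_ofπ, V.map_id, Category.id_comp] at h2 ⊢
    rw [h2]
    simp
  map_comp {q q' q''} h h' := by
    apply Cofork.IsColimit.hom_ext (cok q)
    have h1 := (CokernelCofork.IsColimit.desc' (cok q) (V.map (h ≫ h') ≫ g₀ q'')
      (coker_cond U V u W₀ g₀ w₀ (h ≫ h'))).2
    have h2 := (CokernelCofork.IsColimit.desc' (cok q) (V.map h ≫ g₀ q')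
      (coker_cond U V u W₀ g₀ w₀ h)).2
    have h3 := (CokernelCofork.IsColimit.desc' (cok q') (V.map h' ≫ g₀ q'')
      (coker_cond U V u W₀ g₀ w₀ h')).2
    simp only [CokernelCofork.π_ofπ] at h1 h2 h3 ⊢
    rw [h1, ← Category.assoc, h2, Category.assoc, h3, ← Category.assoc, ← V.map_comp]

attribute [reducible] cokerFunctor

theorem cokerFunctor_fac {q q' : Q} (h : q ⟶ q') :
    g₀ q ≫ (cokerFunctor U V u W₀ g₀ w₀ cok).map h = V.map h ≫ g₀ q' := by
  have h2 := (CokernelCofork.IsColimit.desc' (cok q) (V.map h ≫ g₀ q')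
    (coker_cond U V u W₀ g₀ w₀ h)).2
  simpa using h2

/-- The projection to the cokernel functor. -/
noncomputable def cokerπ : V ⟶ cokerFunctor U V u W₀ g₀ w₀ cok where
  app q := g₀ q
  naturality _ _ h := (cokerFunctor_fac U V u W₀ g₀ w₀ cok h).symm

end Coker

section PIdx

variable {A : Type u} [Category.{v} A]
variable {J K : Type v} [Preorder J] [Preorder K]

/-- Index of approximations of a morphism `i` by morphisms between objects
appearing in two given diagrams. -/
structure PIdx (FC : J ⥤ A) (FD : K ⥤ A) (cC : Cocone FC) (cD : Cocone FD)
    (i : cC.pt ⟶ cD.pt) : Type v where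
  j : J
  k : K
  φ : FC.obj j ⟶ FD.obj k
  comm : φ ≫ cD.ι.app k = cC.ι.app j ≫ i

variable {FC : J ⥤ A} {FD : K ⥤ A} {cC : Cocone FC} {cD : Cocone FD} {i : cC.pt ⟶ cD.pt}

instance : Preorder (PIdx FC FD cC cD i) where
  le x y := ∃ (hj : x.j ≤ y.j) (hk : x.k ≤ y.k),
    FC.map (homOfLE hj) ≫ y.φ = x.φ ≫ FD.map (homOfLE hk)
  le_refl x := ⟨le_refl _, le_refl _, by
    rw [show homOfLE (le_refl x.j) = 𝟙 x.j from Subsingleton.elim _ _,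
      show homOfLE (le_refl x.k) = 𝟙 x.k from Subsingleton.elim _ _]
    simp⟩
  le_trans x y z h h' := by
    obtain ⟨hj, hk, hc⟩ := h
    obtain ⟨hj', hk', hc'⟩ := h'
    refine ⟨hj.trans hj', hk.trans hk', ?_⟩
    rw [← mapHomOfLE_comp FC hj hj', Category.assoc, hc', ← Category.assoc, hc,
      Category.assoc, mapHomOfLE_comp]

theorem PIdx.le_j {x y : PIdx FC FD cC cD i} (h : x ≤ y) : x.j ≤ y.j := h.choose

theorem PIdx.le_k {x y : PIdx FC FD cC cD i} (h : x ≤ y) : x.k ≤ y.k := h.choose_spec.choose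

theorem PIdx.compat {x y : PIdx FC FD cC cD i} (h : x ≤ y) (hj : x.j ≤ y.j) (hk : x.k ≤ y.k) :
    FC.map (homOfLE hj) ≫ y.φ = x.φ ≫ FD.map (homOfLE hk) :=
  h.choose_spec.choose_spec

/-- Projection to the first index. -/
def projJ : PIdx FC FD cC cD i ⥤ J where
  obj x := x.j
  map {x y} h := homOfLE (PIdx.le_j (leOfHom h))
  map_id _ := Subsingleton.elim _ _
  map_comp _ _ := Subsingleton.elim _ _

/-- Projection to the second index. -/
def projK : PIdx FC FD cC cD i ⥤ K where
  obj x := x.k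
  map {x y} h := homOfLE (PIdx.le_k (leOfHom h))
  map_id _ := Subsingleton.elim _ _
  map_comp _ _ := Subsingleton.elim _ _

@[simp]
theorem projJ_obj {x : PIdx FC FD cC cD i} : (projJ : PIdx FC FD cC cD i ⥤ J).obj x = x.j := rfl

@[simp]
theorem projK_obj {x : PIdx FC FD cC cD i} : (projK : PIdx FC FD cC cD i ⥤ K).obj x = x.k := rfl

@[simp]
theorem projJ_map {x y : PIdx FC FD cC cD i} (h : x ⟶ y) :
    (projJ : PIdx FC FD cC cD i ⥤ J).map h = homOfLE (PIdx.le_j (leOfHom h)) := rfl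

@[simp]
theorem projK_map {x y : PIdx FC FD cC cD i} (h : x ⟶ y) :
    (projK : PIdx FC FD cC cD i ⥤ K).map h = homOfLE (PIdx.le_k (leOfHom h)) := rfl

/-- The tautological natural transformation between the two projections. -/
def pIdxNat : (projJ ⋙ FC : PIdx FC FD cC cD i ⥤ A) ⟶ (projK ⋙ FD : PIdx FC FD cC cD i ⥤ A) where
  app x := x.φ
  naturality x y h := PIdx.compat (leOfHom h) _ _

variable {κ : Cardinal.{v}}

theorem pIdx_directed (hκ : κ.IsRegular) (hJ : IsCardinalDirected κ J)
    (hK : IsCardinalDirected κ K) (hpres : ∀ j, IsPresentable κ (FC.obj j))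
    (hcD : IsColimit cD) : IsCardinalDirected κ (PIdx FC FD cC cD i) := by
  intro s hs
  obtain ⟨jS, hjS⟩ := bound_fam hJ hs (fun x : s => x.1.j)
  obtain ⟨k0, hk0⟩ := bound_fam hK hs (fun x : s => x.1.k)
  obtain ⟨k1, χ, hχ⟩ := exists_factor hκ (hpres jS) hK hcD (cC.ι.app jS ≫ i)
  obtain ⟨k2, hk21, hk22⟩ := bound_pair hκ hK k0 k1
  have key : ∀ x : s, ∃ (kk : K) (hkk : k2 ≤ kk),
      (FC.map (homOfLE (hjS x)) ≫ χ ≫ FD.map (homOfLE hk22)) ≫ FD.map (homOfLE hkk) =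
      (x.1.φ ≫ FD.map (homOfLE ((hk0 x).trans hk21))) ≫ FD.map (homOfLE hkk) := by
    intro x
    apply exists_equalize hκ (hpres x.1.j) hK hcD
    simp only [Category.assoc]
    rw [Cocone.w cD, Cocone.w cD, hχ, ← Category.assoc, Cocone.w cC, x.1.comm]
  choose k' hk'1 hk'2 using key
  obtain ⟨k3, hk3⟩ := bound_fam hK hs k'
  obtain ⟨k4, hk41, hk42⟩ := bound_pair hκ hK k2 k3
  refine ⟨⟨jS, k4, χ ≫ FD.map (homOfLE (hk22.trans hk41)), ?_⟩, fun x hx => ?_⟩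
  · rw [Category.assoc, Cocone.w cD, hχ]
  · refine ⟨hjS ⟨x, hx⟩, (hk0 ⟨x, hx⟩).trans (hk21.trans hk41), ?_⟩
    have h6 := congrArg (fun z => z ≫ FD.map (homOfLE ((hk3 ⟨x, hx⟩).trans hk42)))
      (hk'2 ⟨x, hx⟩)
    simp only [Category.assoc, mapHomOfLE_comp] at h6 ⊢
    exact h6

end PIdx

section Ord

variable {κ : Cardinal.{v}}

theorem toType_nonempty (hκ : κ.IsRegular) : Nonempty κ.ord.ToType := by
  rw [Ordinal.toType_nonempty_iff_ne_zero]
  intro h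
  have h2 := Cardinal.card_ord κ
  rw [h] at h2
  simp only [Ordinal.card_zero] at h2
  have h3 : (Cardinal.aleph0.{v}) ≤ 0 := by
    rw [h2]
    exact hκ.aleph0_le
  exact Cardinal.aleph0_ne_zero (by simpa using h3)

theorem exists_gt_of_small (hκ : κ.IsRegular) {s : Set κ.ord.ToType}
    (hs : Cardinal.mk s < κ) : ∃ x, ∀ y ∈ s, y < x := by
  haveI : IsWellOrder κ.ord.ToType (· < ·) := isWellOrder_lt
  have hb : ¬ IsCofinal s := fun h => absurd (Order.cof_le h)
    (by rw [Ordinal.cof_toType, hκ.cof_eq]; exact not_le.mpr hs)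
  exact not_isCofinal_iff.mp hb

theorem exists_gt_pair (hκ : κ.IsRegular) (a b : κ.ord.ToType) :
    ∃ z, a < z ∧ b < z := by
  obtain ⟨x, hx⟩ := exists_gt_of_small hκ (s := {a, b})
    (lt_of_lt_of_le (((Set.finite_singleton b).insert a).lt_aleph0) hκ.aleph0_le)
  exact ⟨x, hx a (by simp), hx b (by simp)⟩

end Ord

end LocCohAux

namespace LocCohAux

open CategoryTheory CategoryTheory.Limits Opposite LocCoh

variable {κ : Cardinal.{v}}

theorem assemble {A : Type u} [Category.{v} A] [Preadditive A]
    (E : Set (ShortComplex A)) (hlc : IsLocallyCoherent κ E)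
    {Q : Type v} [Preorder Q] (hQ : IsCardinalDirected κ Q)
    {U V Wfun : Q ⥤ A} (unat : U ⟶ V) (gnat : V ⟶ Wfun)
    (w₀ : ∀ q, unat.app q ≫ gnat.app q = 0)
    (hmem : ∀ q, ShortComplex.mk (unat.app q) (gnat.app q) (w₀ q) ∈ E)
    (hUp : ∀ q, IsPresentable κ (U.obj q)) (hVp : ∀ q, IsPresentable κ (V.obj q))
    (hWp : ∀ q, IsPresentable κ (Wfun.obj q))
    {cU : Cocone U} {cV : Cocone V} {cW : Cocone Wfun}
    (hcU : IsColimit cU) (hcV : IsColimit cV) (hcW : IsColimit cW)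
    (i : cU.pt ⟶ cV.pt) (hsq : ∀ q, cU.ι.app q ≫ i = unat.app q ≫ cV.ι.app q) :
    AdmissibleMonoOf E i := by
  let gcoc : Cocone V :=
    { pt := cW.pt
      ι :=
        { app := fun q => gnat.app q ≫ cW.ι.app q
          naturality := fun q q' h => by
            simp only [Functor.const_obj_obj, Functor.const_obj_map, Category.comp_id,
              ← Category.assoc, ← gnat.naturality h]
            simp [Category.assoc] } }
  let gm : cV.pt ⟶ cW.pt := hcV.desc gcoc
  have hfac : ∀ q, cV.ι.app q ≫ gm = gnat.app q ≫ cW.ι.app q := fun q => hcV.fac gcoc q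
  have hw : i ≫ gm = 0 := by
    apply hcU.hom_ext
    intro q
    rw [← Category.assoc, hsq q, Category.assoc, hfac q, ← Category.assoc, w₀ q,
      zero_comp, comp_zero]
  let Fses : Q ⥤ ShortComplex A :=
    { obj := fun q => ShortComplex.mk (unat.app q) (gnat.app q) (w₀ q)
      map := fun {q q'} h =>
        { τ₁ := U.map h
          τ₂ := V.map h
          τ₃ := Wfun.map h
          comm₁₂ := unat.naturality h
          comm₂₃ := gnat.naturality h }
      map_id := fun q => by
        apply ShortComplex.hom_ext <;> simp
      map_comp := fun {q q' q''} h h' => by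
        apply ShortComplex.hom_ext <;> simp }
  let cfin : Cocone Fses :=
    { pt := ShortComplex.mk i gm hw
      ι :=
        { app := fun q =>
            { τ₁ := cU.ι.app q
              τ₂ := cV.ι.app q
              τ₃ := cW.ι.app q
              comm₁₂ := hsq q
              comm₂₃ := hfac q }
          naturality := fun q q' h => by
            apply ShortComplex.hom_ext <;> simp [Fses] } }
  have hfin : IsColimit cfin :=
    ShortComplex.isColimitOfIsColimitπ cfin hcU hcV hcW
  exact ⟨cW.pt, gm, hw, (hlc _).mpr
    ⟨Q, inferInstance, hQ, Fses, cfin, ⟨hfin⟩, rfl,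
      fun q => ⟨hmem q, hUp q, hVp q, hWp q⟩⟩⟩

end LocCohAux

open LocCoh LocCohAux

theorem statement_5 (κ : Cardinal.{v}) (hκ : κ.IsRegular)
    (A : Type u) [Category.{v} A] [Preadditive A] [HasFiniteBiproducts A]
    (E : Set (ShortComplex A)) (hacc : IsAccessibleCat κ A)
    (hE : IsExactStructure E) (hlc : IsLocallyCoherent κ E)
    {C D : A} (i : C ⟶ D) :
    AdmissibleMonoOf E i ↔
      ∀ (S T : A), IsPresentable κ S → IsPresentable κ T →
        ∀ (t : S ⟶ T) (c : S ⟶ C) (d : T ⟶ D), c ≫ i = t ≫ d →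
          ∃ (U V : A) (u : U ⟶ V), IsPresentable κ U ∧ IsPresentable κ V ∧
            (∃ (W : A) (g : V ⟶ W) (w : u ≫ g = 0),
              IsPresentable κ W ∧ ShortComplex.mk u g w ∈ E) ∧
            ∃ (a : S ⟶ U) (b : T ⟶ V) (a' : U ⟶ C) (b' : V ⟶ D),
              a ≫ u = t ≫ b ∧ a' ≫ i = u ≫ b' ∧ a ≫ a' = c ∧ b ≫ b' = d := by
  constructor
  · rintro ⟨Z, g, w, hmem⟩ S T hS hT t cmap d hsq
    obtain ⟨J, pre, hJ, F, cc, ⟨hc⟩, hpt, hterms⟩ := (hlc _).mp hmem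
    letI := pre
    haveI : HasColimitsOfShape J A := hacc.hasColimitsOfShape J pre hJ
    haveI := directed_of_dir hκ hJ
    haveI := nonempty_of_dir hκ hJ
    let cc' : Cocone F := ⟨ShortComplex.mk i g w,
      cc.ι ≫ (Functor.const J).map (eqToHom hpt)⟩
    have hc' : IsColimit cc' :=
      hc.ofIsoColimit (Cocones.ext (eqToIso hpt) (fun j => rfl))
    have hc₁ : IsColimit (ShortComplex.π₁.mapCocone cc') :=
      isColimitOfPreserves _ hc'
    have hc₂ : IsColimit (ShortComplex.π₂.mapCocone cc') :=
      isColimitOfPreserves _ hc'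
    obtain ⟨j₁, a₀, ha₀⟩ : ∃ (j : J) (g : S ⟶ (F.obj j).X₁), g ≫ (cc'.ι.app j).τ₁ = cmap :=
        exists_factor hκ hS hJ hc₁ cmap
    obtain ⟨j₂, b₀, hb₀⟩ : ∃ (j : J) (g : T ⟶ (F.obj j).X₂), g ≫ (cc'.ι.app j).τ₂ = d :=
        exists_factor hκ hT hJ hc₂ d
    obtain ⟨j₃, h13, h23⟩ := bound_pair hκ hJ j₁ j₂
    have ha₀' : a₀ ≫ (cc'.ι.app j₁).τ₁ = cmap := ha₀
    have hb₀' : b₀ ≫ (cc'.ι.app j₂).τ₂ = d := hb₀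
    have key : (a₀ ≫ (F.map (homOfLE h13)).τ₁ ≫ (F.obj j₃).f) ≫
          (ShortComplex.π₂.mapCocone cc').ι.app j₃ =
        (t ≫ b₀ ≫ (F.map (homOfLE h23)).τ₂) ≫
          (ShortComplex.π₂.mapCocone cc').ι.app j₃ := by
      have w1 : (F.obj j₃).f ≫ (cc'.ι.app j₃).τ₂ = (cc'.ι.app j₃).τ₁ ≫ i :=
        (cc'.ι.app j₃).comm₁₂.symm
      have w2 : (F.map (homOfLE h13)).τ₁ ≫ (cc'.ι.app j₃).τ₁ = (cc'.ι.app j₁).τ₁ :=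
        congrArg ShortComplex.Hom.τ₁ (cc'.w (homOfLE h13))
      have w3 : (F.map (homOfLE h23)).τ₂ ≫ (cc'.ι.app j₃).τ₂ = (cc'.ι.app j₂).τ₂ :=
        congrArg ShortComplex.Hom.τ₂ (cc'.w (homOfLE h23))
      show (a₀ ≫ (F.map (homOfLE h13)).τ₁ ≫ (F.obj j₃).f) ≫ (cc'.ι.app j₃).τ₂ =
        (t ≫ b₀ ≫ (F.map (homOfLE h23)).τ₂) ≫ (cc'.ι.app j₃).τ₂
      simp only [Category.assoc]
      rw [w1]
      slice_lhs 2 3 => rw [w2]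
      rw [w3, hb₀', ← Category.assoc, ha₀']
      exact hsq
    obtain ⟨j₄, h34, heq⟩ := exists_equalize hκ hS hJ hc₂ key
    refine ⟨(F.obj j₄).X₁, (F.obj j₄).X₂, (F.obj j₄).f, (hterms j₄).2.1,
      (hterms j₄).2.2.1,
      ⟨(F.obj j₄).X₃, (F.obj j₄).g, (F.obj j₄).zero, (hterms j₄).2.2.2, (hterms j₄).1⟩,
      (a₀ ≫ (F.map (homOfLE h13)).τ₁) ≫ (F.map (homOfLE h34)).τ₁,
      (b₀ ≫ (F.map (homOfLE h23)).τ₂) ≫ (F.map (homOfLE h34)).τ₂,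
      (cc'.ι.app j₄).τ₁, (cc'.ι.app j₄).τ₂, ?_, ?_, ?_, ?_⟩
    · -- a ≫ u = t ≫ b
      have comm := (F.map (homOfLE h34)).comm₁₂
      have heq' : (a₀ ≫ (F.map (homOfLE h13)).τ₁ ≫ (F.obj j₃).f) ≫ (F.map (homOfLE h34)).τ₂ =
          (t ≫ b₀ ≫ (F.map (homOfLE h23)).τ₂) ≫ (F.map (homOfLE h34)).τ₂ := heq
      simp only [Category.assoc]
      rw [comm]
      simp only [Category.assoc] at heq'
      exact heq'
    · -- a' ≫ i = u ≫ b'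
      exact (cc'.ι.app j₄).comm₁₂
    · -- a ≫ a' = cmap
      have w2 : (F.map (homOfLE h34)).τ₁ ≫ (cc'.ι.app j₄).τ₁ = (cc'.ι.app j₃).τ₁ :=
        congrArg ShortComplex.Hom.τ₁ (cc'.w (homOfLE h34))
      have w3 : (F.map (homOfLE h13)).τ₁ ≫ (cc'.ι.app j₃).τ₁ = (cc'.ι.app j₁).τ₁ :=
        congrArg ShortComplex.Hom.τ₁ (cc'.w (homOfLE h13))
      simp only [Category.assoc]
      rw [w2, w3]
      exact ha₀'
    · -- b ≫ b' = d
      have w2 : (F.map (homOfLE h34)).τ₂ ≫ (cc'.ι.app j₄).τ₂ = (cc'.ι.app j₃).τ₂ :=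
        congrArg ShortComplex.Hom.τ₂ (cc'.w (homOfLE h34))
      have w3 : (F.map (homOfLE h23)).τ₂ ≫ (cc'.ι.app j₃).τ₂ = (cc'.ι.app j₂).τ₂ :=
        congrArg ShortComplex.Hom.τ₂ (cc'.w (homOfLE h23))
      simp only [Category.assoc]
      rw [w2, w3]
      exact hb₀'
  · intro H
    obtain ⟨G, hGsmall, hGpres, hGcolim⟩ := hacc.exists_generators
    obtain ⟨J, preJ, hJ, FC, cC, ⟨hcC⟩, hptC, hvalC⟩ := hGcolim C
    obtain ⟨K, preK, hK, FD, cD, ⟨hcD⟩, hptD, hvalD⟩ := hGcolim D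
    letI := preJ
    letI := preK
    subst hptC
    subst hptD
    have hpresC : ∀ j, IsPresentable κ (FC.obj j) := fun j => hGpres _ (hvalC j)
    have hpresD : ∀ k, IsPresentable κ (FD.obj k) := fun k => hGpres _ (hvalD k)
    have hP : IsCardinalDirected κ (PIdx FC FD cC cD i) :=
      pIdx_directed hκ hJ hK hpresC hcD
    haveI := directed_of_dir hκ hP
    haveI := nonempty_of_dir hκ hP
    haveI hfinJ : (projJ : PIdx FC FD cC cD i ⥤ J).Final := by
      apply Functor.final_of_exists_of_isFiltered
      · intro j
        obtain ⟨k, φ, hφ⟩ := exists_factor hκ (hpresC j) hK hcD (cC.ι.app j ≫ i)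
        exact ⟨⟨j, k, φ, hφ⟩, ⟨𝟙 j⟩⟩
      · intro d c s s'
        exact ⟨c, 𝟙 c, by rw [Subsingleton.elim s s']⟩
    haveI hfinK : (projK : PIdx FC FD cC cD i ⥤ K).Final := by
      apply Functor.final_of_exists_of_isFiltered
      · intro k
        obtain ⟨j⟩ := nonempty_of_dir hκ hJ
        obtain ⟨k1, φ, hφ⟩ := exists_factor hκ (hpresC j) hK hcD (cC.ι.app j ≫ i)
        obtain ⟨k2, hka, hkb⟩ := bound_pair hκ hK k k1
        refine ⟨⟨j, k2, φ ≫ FD.map (homOfLE hkb), ?_⟩, ⟨homOfLE hka⟩⟩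
        rw [Category.assoc, Cocone.w cD, hφ]
      · intro d c s s'
        exact ⟨c, 𝟙 c, by rw [Subsingleton.elim s s']⟩
    let cSP : Cocone (projJ ⋙ FC : PIdx FC FD cC cD i ⥤ A) := cC.whisker projJ
    let cTP : Cocone (projK ⋙ FD : PIdx FC FD cC cD i ⥤ A) := cD.whisker projK
    have hcSP : IsColimit cSP := (Functor.Final.isColimitWhiskerEquiv projJ cC).symm hcC
    have hcTP : IsColimit cTP := (Functor.Final.isColimitWhiskerEquiv projK cD).symm hcD
    have interp : ∀ p : PIdx FC FD cC cD i, ∃ (p₆ : PIdx FC FD cC cD i)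
        (hp₆ : p ≤ p₆) (U V : A) (uu : U ⟶ V)
        (aU : FC.obj p.j ⟶ U) (aV : FD.obj p.k ⟶ V)
        (bU : U ⟶ FC.obj p₆.j) (bV : V ⟶ FD.obj p₆.k),
        IsPresentable κ U ∧ IsPresentable κ V ∧
        (∃ (W : A) (gw : V ⟶ W) (ww : uu ≫ gw = 0),
          IsPresentable κ W ∧ ShortComplex.mk uu gw ww ∈ E) ∧
        aU ≫ uu = p.φ ≫ aV ∧
        aU ≫ bU = FC.map (homOfLE (PIdx.le_j hp₆)) ∧
        aV ≫ bV = FD.map (homOfLE (PIdx.le_k hp₆)) ∧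
        bU ≫ p₆.φ = uu ≫ bV := by
      intro p
      obtain ⟨U, V, uu, hU, hV, hses0, a, b, a', b', hsq1, hsq2, hfa, hfb⟩ :=
        H (FC.obj p.j) (FD.obj p.k) (hpresC p.j) (hpresD p.k) p.φ
          (cC.ι.app p.j) (cD.ι.app p.k) p.comm.symm
      obtain ⟨p₁, bU₀, hbU₀⟩ : ∃ (p : PIdx FC FD cC cD i) (g : U ⟶ FC.obj p.j),
          g ≫ cC.ι.app p.j = a' := exists_factor hκ hU hP hcSP a'
      obtain ⟨p₂, bV₀, hbV₀⟩ : ∃ (p : PIdx FC FD cC cD i) (g : V ⟶ FD.obj p.k),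
          g ≫ cD.ι.app p.k = b' := exists_factor hκ hV hP hcTP b'
      have hbU₀' : bU₀ ≫ cC.ι.app p₁.j = a' := hbU₀
      have hbV₀' : bV₀ ≫ cD.ι.app p₂.k = b' := hbV₀
      obtain ⟨p₃', h31, h32⟩ := bound_pair hκ hP p₁ p₂
      obtain ⟨p₃, h3p, h33⟩ := bound_pair hκ hP p p₃'
      have le13 : p₁ ≤ p₃ := h31.trans h33
      have le23 : p₂ ≤ p₃ := h32.trans h33
      have hdef : ((bU₀ ≫ FC.map (homOfLE (PIdx.le_j le13))) ≫ p₃.φ) ≫ cTP.ι.app p₃ =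
          (uu ≫ bV₀ ≫ FD.map (homOfLE (PIdx.le_k le23))) ≫ cTP.ι.app p₃ := by
        show ((bU₀ ≫ FC.map (homOfLE (PIdx.le_j le13))) ≫ p₃.φ) ≫ cD.ι.app p₃.k =
          (uu ≫ bV₀ ≫ FD.map (homOfLE (PIdx.le_k le23))) ≫ cD.ι.app p₃.k
        simp only [Category.assoc]
        rw [p₃.comm]
        slice_lhs 2 3 => rw [Cocone.w cC]
        slice_rhs 3 4 => rw [Cocone.w cD]
        slice_lhs 1 2 => rw [hbU₀']
        slice_rhs 2 3 => rw [hbV₀']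
        rw [hsq2]
      obtain ⟨p₄, h34, heq1⟩ := exists_equalize hκ hU hP hcTP hdef
      have heq1' : ((bU₀ ≫ FC.map (homOfLE (PIdx.le_j le13))) ≫ p₃.φ) ≫
            FD.map (homOfLE (PIdx.le_k h34)) =
          (uu ≫ bV₀ ≫ FD.map (homOfLE (PIdx.le_k le23))) ≫
            FD.map (homOfLE (PIdx.le_k h34)) := heq1
      have hcond1 : ((a ≫ bU₀ ≫ FC.map (homOfLE (PIdx.le_j le13))) ≫
            FC.map (homOfLE (PIdx.le_j h34))) ≫ cSP.ι.app p₄ =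
          FC.map (homOfLE (PIdx.le_j (h3p.trans h34))) ≫ cSP.ι.app p₄ := by
        show ((a ≫ bU₀ ≫ FC.map (homOfLE (PIdx.le_j le13))) ≫
            FC.map (homOfLE (PIdx.le_j h34))) ≫ cC.ι.app p₄.j =
          FC.map (homOfLE (PIdx.le_j (h3p.trans h34))) ≫ cC.ι.app p₄.j
        simp only [Category.assoc]
        rw [Cocone.w cC, Cocone.w cC, Cocone.w cC]
        rw [hbU₀', hfa]
      obtain ⟨p₅, h45, heq2⟩ := exists_equalize hκ (hpresC p.j) hP hcSP hcond1
      have heq2' : ((a ≫ bU₀ ≫ FC.map (homOfLE (PIdx.le_j le13))) ≫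
            FC.map (homOfLE (PIdx.le_j h34))) ≫ FC.map (homOfLE (PIdx.le_j h45)) =
          FC.map (homOfLE (PIdx.le_j (h3p.trans h34))) ≫
            FC.map (homOfLE (PIdx.le_j h45)) := heq2
      have hcond2 : ((b ≫ bV₀ ≫ FD.map (homOfLE (PIdx.le_k le23))) ≫
            FD.map (homOfLE (PIdx.le_k (h34.trans h45)))) ≫ cTP.ι.app p₅ =
          FD.map (homOfLE (PIdx.le_k ((h3p.trans h34).trans h45))) ≫ cTP.ι.app p₅ := by
        show ((b ≫ bV₀ ≫ FD.map (homOfLE (PIdx.le_k le23))) ≫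
            FD.map (homOfLE (PIdx.le_k (h34.trans h45)))) ≫ cD.ι.app p₅.k =
          FD.map (homOfLE (PIdx.le_k ((h3p.trans h34).trans h45))) ≫ cD.ι.app p₅.k
        simp only [Category.assoc]
        rw [Cocone.w cD, Cocone.w cD, Cocone.w cD]
        rw [hbV₀', hfb]
      obtain ⟨p₆, h56, heq3⟩ := exists_equalize hκ (hpresD p.k) hP hcTP hcond2
      have heq3' : ((b ≫ bV₀ ≫ FD.map (homOfLE (PIdx.le_k le23))) ≫
            FD.map (homOfLE (PIdx.le_k (h34.trans h45)))) ≫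
              FD.map (homOfLE (PIdx.le_k h56)) =
          FD.map (homOfLE (PIdx.le_k ((h3p.trans h34).trans h45))) ≫
            FD.map (homOfLE (PIdx.le_k h56)) := heq3
      have hp₆ : p ≤ p₆ := ((h3p.trans h34).trans h45).trans h56
      have le16 : p₁ ≤ p₆ := (le13.trans h34).trans (h45.trans h56)
      have le26 : p₂ ≤ p₆ := (le23.trans h34).trans (h45.trans h56)
      have le36 : p₃ ≤ p₆ := h34.trans (h45.trans h56)
      refine ⟨p₆, hp₆, U, V, uu, a, b,
        bU₀ ≫ FC.map (homOfLE (PIdx.le_j le16)),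
        bV₀ ≫ FD.map (homOfLE (PIdx.le_k le26)),
        hU, hV, hses0, hsq1, ?_, ?_, ?_⟩
      · -- a ≫ bU-final = FC.map
        have h6 := congrArg (fun z => z ≫ FC.map (homOfLE (PIdx.le_j h56))) heq2'
        simp only [Category.assoc, mapHomOfLE_comp] at h6 ⊢
        exact h6
      · -- b ≫ bV-final = FD.map
        have h6 := heq3'
        simp only [Category.assoc, mapHomOfLE_comp] at h6 ⊢
        exact h6
      · -- square at p₆
        have h7 := congrArg (fun z => z ≫ FD.map (homOfLE (PIdx.le_k (h45.trans h56)))) heq1'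
        have h8 := PIdx.compat le36 (PIdx.le_j le36) (PIdx.le_k le36)
        have h9 : FC.map (homOfLE (PIdx.le_j le16)) =
            FC.map (homOfLE (PIdx.le_j le13)) ≫ FC.map (homOfLE (PIdx.le_j le36)) :=
          (mapHomOfLE_comp FC _ _).symm
        rw [h9]
        simp only [Category.assoc]
        rw [h8]
        simp only [Category.assoc, mapHomOfLE_comp] at h7 ⊢
        exact h7
    choose hat hle Ub Vb ub aU aV bU bV hUp hVp hses hsq hA hB hC using interp
    choose Wb gb wb hWp hmemE using hses
    have hO2 : ∀ a b : κ.ord.ToType, ∃ z, a < z ∧ b < z := exists_gt_pair hκ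
    obtain ⟨x₀⟩ := toType_nonempty hκ
    have hdirP : ∀ a b : PIdx FC FD cC cD i, ∃ z, a ≤ z ∧ b ≤ z :=
      fun a b => bound_pair hκ hP a b
    have hQdir : IsCardinalDirected κ
        (RefHat (P := PIdx FC FD cC cD i) hat κ.ord.ToType) := by
      intro s hs
      obtain ⟨pS, hpS⟩ := bound_fam hP hs (fun x : s => hat x.1.base)
      obtain ⟨xS, hxS⟩ := exists_gt_of_small hκ (s := Set.range fun x : s => x.1.lvl)
        (lt_of_le_of_lt Cardinal.mk_range_le hs)
      exact ⟨⟨pS, xS⟩, fun q hq => Or.inr ⟨hle q.base, hpS ⟨q, hq⟩, hxS _ ⟨⟨q, hq⟩, rfl⟩⟩⟩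
    haveI : HasColimitsOfShape (RefHat (P := PIdx FC FD cC cD i) hat κ.ord.ToType) A :=
      hacc.hasColimitsOfShape _ inferInstance hQdir
    have hsqQ : ∀ q : RefHat (P := PIdx FC FD cC cD i) hat κ.ord.ToType,
        (bU q.base ≫ cC.ι.app (hat q.base).j) ≫ i =
          ub q.base ≫ (bV q.base ≫ cD.ι.app (hat q.base).k) := by
      intro q
      simp only [Category.assoc]
      rw [← (hat q.base).comm, ← Category.assoc, hC q.base, Category.assoc]
    have hsq' : ∀ p : PIdx FC FD cC cD i,
        aU p ≫ ub p = (pIdxNat (FC := FC) (FD := FD) (cC := cC) (cD := cD) (i := i)).app p ≫ aV p :=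
      hsq
    have hC' : ∀ p : PIdx FC FD cC cD i,
        bU p ≫ (pIdxNat (FC := FC) (FD := FD) (cC := cC) (cD := cD) (i := i)).app (hat p) =
          ub p ≫ bV p := hC
    exact assemble E hlc hQdir
      (refNatTrans (O := κ.ord.ToType) (projJ ⋙ FC) Ub aU bU hle hA (F' := (projK ⋙ FD : PIdx FC FD cC cD i ⥤ A)) (G₀' := Vb) aV bV hB pIdxNat ub hsq' hC')
      (cokerπ _ _
        (refNatTrans (O := κ.ord.ToType) (projJ ⋙ FC) Ub aU bU hle hA (F' := (projK ⋙ FD : PIdx FC FD cC cD i ⥤ A)) (G₀' := Vb) aV bV hB pIdxNat ub hsq' hC')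
        (fun q => Wb q.base) (fun q => gb q.base) (fun q => wb q.base)
        (fun q => (hE.kerCoker _ (hmemE q.base)).2.some))
      (fun q => wb q.base)
      (fun q => hmemE q.base)
      (fun q => hUp q.base) (fun q => hVp q.base) (fun q => hWp q.base)
      (refIsColimit (O := κ.ord.ToType) (projJ ⋙ FC) Ub aU bU hle hA cSP hcSP hdirP x₀ hO2)
      (refIsColimit (O := κ.ord.ToType) (projK ⋙ FD) Vb aV bV hle hB cTP hcTP hdirP x₀ hO2)
      (colimit.isColimit _)
      i hsqQ
end
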